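/- arXiv:2604.04124 — 9 statements merged into one kernel-verified Lean document; each statement's English description precedes it below -/
import Mathlib

section
/- For all indices 0 ≤ i, j ≤ n−1, the coefficient of t^{n−1} in the remainder of t^i · D_f(t^j) upon division by f in 𝔽_q[t] equals the Kronecker delta δ_{i,j}. (Equivalently, with respect to the residue pairing ⟨a, η*⟩ = Res_∞(a·η*), the family {D_f(t^j)·(−dt/f)}_{0≤j<n} is the dual basis of the basis {t^i}_{0≤i<n} of 𝔽_q[t]/(f).) -/
open Polynomial Finset

/-- For a monic polynomial `f` of degree `n ≥ 1` over the finite field `F = 𝔽_q`,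
with dual map `D_f(t^j) = ∑_{jj=0}^{n-j-1} a_{j+jj+1} t^jj`, the coefficient of `t^{n-1}` in the
remainder of `t^i · D_f(t^j)` upon division by `f` equals the Kronecker delta `δ_{i,j}`,
for all `0 ≤ i, j ≤ n-1`. -/
theorem weil_dual_basis {F : Type*} [Field F] [Fintype F]
    (f : F[X]) (hf : f.Monic) (n : ℕ) (hn : f.natDegree = n) (hn1 : 1 ≤ n)
    (i j : ℕ) (hi : i < n) (hj : j < n) :
    ((X ^ i * ∑ jj ∈ Finset.range (n - j), C (f.coeff (j + jj + 1)) * X ^ jj) %ₘ f).coeff (n - 1)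
      = if i = j then (1 : F) else 0 := by
  set G : F[X] := ∑ jj ∈ Finset.range (n - j), C (f.coeff (j + jj + 1)) * X ^ jj with hG
  have hGc : ∀ k, G.coeff k = if k < n - j then f.coeff (j + k + 1) else 0 := by
    intro k
    rw [hG, finset_sum_coeff]
    simp only [coeff_C_mul, coeff_X_pow, mul_ite, mul_one, mul_zero]
    simp [Finset.sum_ite_eq', Finset.mem_range, eq_comm]
  have hfn : f.coeff n = 1 := by rw [← hn]; exact hf.coeff_natDegree
  have hfdeg : f.degree = (n : ℕ) := by
    rw [degree_eq_natDegree hf.ne_zero, hn]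
  rcases le_or_gt i j with h | h
  · -- case i ≤ j
    have hdeg : (X ^ i * G).degree < f.degree := by
      rw [hfdeg, Polynomial.degree_lt_iff_coeff_zero]
      intro m hm
      have hmn : n ≤ m := by exact_mod_cast hm
      rw [mul_comm, coeff_mul_X_pow', if_pos (by omega), hGc,
        if_neg (show ¬ (m - i < n - j) by omega)]
    rw [(modByMonic_eq_self_iff hf).mpr hdeg]
    rw [mul_comm, coeff_mul_X_pow', if_pos (by omega : i ≤ n - 1), hGc]
    by_cases hij : i = j
    · rw [if_pos (show n - 1 - i < n - j by omega), if_pos hij]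
      have : j + (n - 1 - i) + 1 = n := by omega
      rw [this, hfn]
    · have hij' : i < j := lt_of_le_of_ne h hij
      rw [if_neg (show ¬ (n - 1 - i < n - j) by omega), if_neg hij]
  · -- case j < i
    obtain ⟨m, rfl⟩ : ∃ m, i = m + (j + 1) := ⟨i - j - 1, by omega⟩
    set r : F[X] := ∑ k ∈ Finset.range (j + 1), C (f.coeff k) * X ^ k with hr
    have hrc : ∀ k, r.coeff k = if k < j + 1 then f.coeff k else 0 := by
      intro k
      rw [hr, finset_sum_coeff]
      simp only [coeff_C_mul, coeff_X_pow, mul_ite, mul_one, mul_zero]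
      simp [Finset.sum_ite_eq', Finset.mem_range, eq_comm]
    have key : f = X ^ (j + 1) * G + r := by
      ext k
      rw [coeff_add, mul_comm, coeff_mul_X_pow', hGc, hrc]
      rcases lt_or_ge k (j + 1) with hk | hk
      · rw [if_neg (show ¬ (j + 1 ≤ k) by omega), if_pos hk, zero_add]
      · rw [if_pos hk, if_neg (show ¬ (k < j + 1) by omega), add_zero]
        rcases lt_or_ge k (n + 1) with hk2 | hk2
        · rw [if_pos (show k - (j + 1) < n - j by omega)]
          congr 1
          omega
        · rw [if_neg (show ¬ (k - (j + 1) < n - j) by omega)]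
          exact coeff_eq_zero_of_natDegree_lt (show f.natDegree < k by omega)
    have hx : X ^ (m + (j + 1)) * G - -(X ^ m * r) = f * X ^ m := by
      rw [key, pow_add]; ring
    have h1 : (X ^ (m + (j + 1)) * G) %ₘ f = (-(X ^ m * r)) %ₘ f :=
      Polynomial.modByMonic_eq_of_dvd_sub hf ⟨X ^ m, hx⟩
    rw [h1]
    have hdeg2 : (-(X ^ m * r)).degree < f.degree := by
      rw [hfdeg, Polynomial.degree_lt_iff_coeff_zero]
      intro k hk
      have hkn : n ≤ k := by exact_mod_cast hk
      rw [coeff_neg, mul_comm, coeff_mul_X_pow']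
      rcases le_or_gt m k with hk2 | hk2
      · rw [if_pos hk2, hrc, if_neg (show ¬ (k - m < j + 1) by omega), neg_zero]
      · rw [if_neg (show ¬ (m ≤ k) by omega), neg_zero]
    rw [(modByMonic_eq_self_iff hf).mpr hdeg2]
    rw [if_neg (show ¬ (m + (j + 1) = j) by omega)]
    rw [coeff_neg, mul_comm, coeff_mul_X_pow']
    rcases le_or_gt m (n - 1) with hm2 | hm2
    · rw [if_pos hm2, hrc, if_neg (show ¬ (n - 1 - m < j + 1) by omega), neg_zero]
    · rw [if_neg (show ¬ (m ≤ n - 1) by omega), neg_zero]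
end

section
/- Let p ∈ 𝔽_q[t] be monic irreducible of degree d and let k ≥ 1. For all indices 0 ≤ i, l ≤ k−1 and 0 ≤ j, m ≤ d−1, the coefficient of t^{kd−1} in the remainder of p^i · t^j · D_p(t^m) · p^{k−1−l} upon division by p^k in 𝔽_q[t] equals δ_{i,l}·δ_{j,m}. (Equivalently, the quotient algebra 𝔽_q[t]/(p^k) has basis {p(t)^i t^j : 0 ≤ i < k, 0 ≤ j < d} whose dual basis under the residue pairing is {D_p(t^m)·p(t)^{k−1−l}·(−dt/p^k)}.) -/
open Polynomial Finset

private lemma coeff_mul_monic_top {F : Type*} [Field F] (w P : Polynomial F) (hP : P.Monic)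
    (e : ℕ) (hw : w.natDegree ≤ e) : (w * P).coeff (e + P.natDegree) = w.coeff e := by
  rw [coeff_mul, Finset.sum_eq_single (e, P.natDegree)]
  · rw [hP.coeff_natDegree, mul_one]
  · rintro ⟨a, b⟩ hab hne
    simp only [Finset.HasAntidiagonal.mem_antidiagonal] at hab
    have hne' : ¬(a = e ∧ b = P.natDegree) := by
      intro h; exact hne (by rw [h.1, h.2])
    rcases lt_or_ge e a with h | h
    · rw [coeff_eq_zero_of_natDegree_lt (lt_of_le_of_lt hw h), zero_mul]
    · have : P.natDegree < b := by omega
      rw [coeff_eq_zero_of_natDegree_lt this, mul_zero]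
  · intro h; simp at h

/-- Let `p ∈ 𝔽_q[t]` be monic irreducible of degree `d` and `k ≥ 1`. For all
`0 ≤ i, l ≤ k-1` and `0 ≤ j, m ≤ d-1`, the coefficient of `t^{kd-1}` in the remainder of
`p^i · t^j · D_p(t^m) · p^{k-1-l}` upon division by `p^k` equals `δ_{i,l}·δ_{j,m}`.
Here `D_p(t^m) = ∑_{jj=0}^{d-m-1} b_{m+jj+1} t^jj` with `b_s` the coefficients of `p`. -/
theorem weil_dual_basis_prime_power {F : Type*} [Field F] [Fintype F]
    (p : F[X]) (hp : p.Monic) (hirr : Irreducible p) (d : ℕ) (hd : p.natDegree = d)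
    (k : ℕ) (hk : 1 ≤ k)
    (i l j m : ℕ) (hi : i < k) (hl : l < k) (hj : j < d) (hm : m < d) :
    ((p ^ i * X ^ j * (∑ jj ∈ Finset.range (d - m), C (p.coeff (m + jj + 1)) * X ^ jj)
        * p ^ (k - 1 - l)) %ₘ p ^ k).coeff (k * d - 1)
      = if i = l ∧ j = m then (1 : F) else 0 := by
  have hd1 : 1 ≤ d := by omega
  set S : F[X] := ∑ jj ∈ Finset.range (d - m), C (p.coeff (m + jj + 1)) * X ^ jj with hS
  have hmonk : (p ^ k).Monic := hp.pow k
  have hSdeg : S.natDegree ≤ d - 1 - m := by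
    apply natDegree_sum_le_of_forall_le
    intro jj hjj
    simp only [Finset.mem_range] at hjj
    refine le_trans (natDegree_C_mul_le _ _) ?_
    rw [natDegree_X_pow]; omega
  have hdegXS : (X ^ j * S).natDegree ≤ j + (d - 1 - m) := by
    refine le_trans (natDegree_mul_le) ?_
    rw [natDegree_X_pow]
    omega
  have hg : p ^ i * X ^ j * S * p ^ (k - 1 - l)
      = (X ^ j * S) * p ^ (i + (k - 1 - l)) := by
    rw [pow_add]; ring
  rw [hg]
  rcases lt_trichotomy i l with hil | hil | hil
  · -- i < l : everything has low degree, remainder is itself, coeff vanishes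
    have hE : i + (k - 1 - l) ≤ k - 2 := by omega
    have hkd : k * d = (k - 2) * d + 2 * d := by
      rw [← add_mul]; congr 1; omega
    have hdegg : ((X ^ j * S) * p ^ (i + (k - 1 - l))).natDegree ≤ k * d - 2 := by
      refine le_trans (natDegree_mul_le) ?_
      rw [natDegree_pow, hd]
      have h2 : (i + (k - 1 - l)) * d ≤ (k - 2) * d := Nat.mul_le_mul_right d hE
      omega
    have hself : (X ^ j * S) * p ^ (i + (k - 1 - l)) %ₘ p ^ k
        = (X ^ j * S) * p ^ (i + (k - 1 - l)) := by
      rw [modByMonic_eq_self_iff hmonk]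
      refine lt_of_le_of_lt degree_le_natDegree ?_
      rw [degree_eq_natDegree (hmonk.ne_zero), natDegree_pow, hd]
      exact_mod_cast by omega
    rw [hself, coeff_eq_zero_of_natDegree_lt (by omega), if_neg]
    rintro ⟨rfl, rfl⟩; omega
  · -- i = l
    have hE : i + (k - 1 - l) = k - 1 := by omega
    rw [hE]
    have hkd : k * d = (k - 1) * d + d := by
      cases k with
      | zero => omega
      | succ n => simp [Nat.succ_sub_one, Nat.succ_mul]
    rcases le_or_gt j m with hjm | hjm
    · -- j ≤ m : degree < k*d, remainder is itself
      have hdegw : (X ^ j * S).natDegree ≤ d - 1 := by omega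
      have hself : (X ^ j * S) * p ^ (k - 1) %ₘ p ^ k = (X ^ j * S) * p ^ (k - 1) := by
        rw [modByMonic_eq_self_iff hmonk]
        refine lt_of_le_of_lt degree_le_natDegree ?_
        rw [degree_eq_natDegree (hmonk.ne_zero), natDegree_pow, hd]
        have : ((X ^ j * S) * p ^ (k - 1)).natDegree ≤ (d - 1) + (k - 1) * d := by
          refine le_trans (natDegree_mul_le) ?_
          rw [natDegree_pow, hd]
          omega
        exact_mod_cast by omega
      rw [hself]
      have hnd : (p ^ (k - 1)).natDegree = (k - 1) * d := by rw [natDegree_pow, hd]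
      have hidx : k * d - 1 = (d - 1) + (p ^ (k - 1)).natDegree := by rw [hnd]; omega
      rw [hidx, coeff_mul_monic_top _ _ (hp.pow _) _ hdegw]
      have hidx2 : d - 1 = (d - 1 - j) + j := by omega
      rw [hidx2, coeff_X_pow_mul]
      rw [hS, finset_sum_coeff]
      simp only [coeff_C_mul, coeff_X_pow, mul_ite, mul_one, mul_zero]
      rw [Finset.sum_ite_eq (Finset.range (d - m)) (d - 1 - j)
        (fun jj => p.coeff (m + jj + 1))]
      rcases eq_or_lt_of_le hjm with rfl | hjm'
      · rw [if_pos (Finset.mem_range.mpr (by omega)), if_pos ⟨hil, rfl⟩,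
          show j + (d - 1 - j) + 1 = d from by omega, ← hd, hp.coeff_natDegree]
      · rw [if_neg (fun hc => by simp only [Finset.mem_range] at hc; omega), if_neg]
        rintro ⟨rfl, rfl⟩; omega
    · -- m < j : use X^(m+1) * S = p - T
      set T : F[X] := ∑ s ∈ Finset.range (m + 1), C (p.coeff s) * X ^ s with hT
      have hTdeg : T.natDegree ≤ m := by
        apply natDegree_sum_le_of_forall_le
        intro s hs
        simp only [Finset.mem_range] at hs
        refine le_trans (natDegree_C_mul_le _ _) ?_
        rw [natDegree_X_pow]; omega
      have key : X ^ (m + 1) * S = p - T := by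
        have hsplit : T + ∑ s ∈ Finset.Ico (m + 1) (d + 1), C (p.coeff s) * X ^ s = p := by
          have hcons := Finset.sum_Ico_consecutive (fun s => C (p.coeff s) * X ^ s)
            (Nat.zero_le (m + 1)) (by omega : m + 1 ≤ d + 1)
          rw [← Finset.range_eq_Ico] at hcons
          rw [hT, hcons]
          simpa only [C_mul_X_pow_eq_monomial, ← Finset.range_eq_Ico] using (p.as_sum_range' (d + 1) (by omega)).symm
        have hIco : X ^ (m + 1) * S
            = ∑ s ∈ Finset.Ico (m + 1) (d + 1), C (p.coeff s) * X ^ s := by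
          rw [Finset.sum_Ico_eq_sum_range, hS, Finset.mul_sum]
          rw [show d + 1 - (m + 1) = d - m from by omega]
          apply Finset.sum_congr rfl
          intro jj _
          rw [show m + 1 + jj = m + jj + 1 from by omega]
          ring
        rw [hIco, eq_sub_iff_add_eq, add_comm]
        exact hsplit
      have hXj : (X : F[X]) ^ j = X ^ (j - m - 1) * X ^ (m + 1) := by
        rw [← pow_add]; congr 1; omega
      have hgg : (X ^ j * S) * p ^ (k - 1)
          = X ^ (j - m - 1) * p ^ k + (-(X ^ (j - m - 1) * T)) * p ^ (k - 1) := by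
        rw [hXj, mul_assoc (X ^ (j - m - 1)), key]
        have hpk : p ^ k = p ^ (k - 1) * p := by rw [← pow_succ]; congr 1; omega
        rw [hpk]; ring
      rw [hgg, add_modByMonic]
      have h1 : X ^ (j - m - 1) * p ^ k %ₘ p ^ k = 0 :=
        (modByMonic_eq_zero_iff_dvd hmonk).mpr (Dvd.intro_left _ rfl)
      have hdeg2 : ((-(X ^ (j - m - 1) * T)) * p ^ (k - 1)).natDegree ≤ k * d - 2 := by
        refine le_trans (natDegree_mul_le) ?_
        rw [natDegree_pow, hd, natDegree_neg]
        have : (X ^ (j - m - 1) * T).natDegree ≤ (j - m - 1) + m := by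
          refine le_trans (natDegree_mul_le) ?_
          rw [natDegree_X_pow]; omega
        omega
      have h2 : (-(X ^ (j - m - 1) * T)) * p ^ (k - 1) %ₘ p ^ k
          = (-(X ^ (j - m - 1) * T)) * p ^ (k - 1) := by
        rw [modByMonic_eq_self_iff hmonk]
        refine lt_of_le_of_lt degree_le_natDegree ?_
        rw [degree_eq_natDegree (hmonk.ne_zero), natDegree_pow, hd]
        exact_mod_cast by omega
      rw [h1, h2, zero_add, coeff_eq_zero_of_natDegree_lt (by omega), if_neg]
      rintro ⟨rfl, rfl⟩; omega
  · -- l < i : divisible by p^k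
    have hdvd : p ^ k ∣ (X ^ j * S) * p ^ (i + (k - 1 - l)) :=
      Dvd.dvd.mul_left (pow_dvd_pow p (by omega)) _
    rw [(modByMonic_eq_zero_iff_dvd hmonk).mpr hdvd, coeff_zero, if_neg]
    rintro ⟨rfl, rfl⟩; omega
end

section
/- Let r ≥ 2 and set P = Π_{j=1}^{r−1} O_f^{(2)}(X_j, X_r) ∈ 𝔽_q[X_1,…,X_r] (a representative of the rank-r Weil operator O_f^{(r)}). For every polynomial g(X_1,…,X_r) ∈ 𝔽_q[X_1,…,X_r] and every choice of indices β_1,…,β_r ∈ {1,…,r}, one has g(X_1,…,X_r)·P ≡ g(X_{β_1},…,X_{β_r})·P Mod f(*). -/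
open Finset MvPolynomial

/-- The rank-two Weil operator `O_g^{(2)}(X_a, X_b) = ∑_{j=1}^{deg g} b_j ∑_{α+β=j-1} X_a^α X_b^β`. -/
noncomputable def weilO2 {F : Type*} [Field F] {σ : Type*} (g : Polynomial F) (a b : σ) :
    MvPolynomial σ F :=
  ∑ j ∈ Finset.range g.natDegree,
    MvPolynomial.C (g.coeff (j + 1)) *
      ∑ pr ∈ Finset.HasAntidiagonal.antidiagonal j, MvPolynomial.X a ^ pr.1 * MvPolynomial.X b ^ pr.2

lemma weilO2_key {F : Type*} [Field F] {σ : Type*} (g : Polynomial F) (a b : σ) :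
    (MvPolynomial.X a - MvPolynomial.X b) * weilO2 g a b =
      Polynomial.aeval (MvPolynomial.X a : MvPolynomial σ F) g
        - Polynomial.aeval (MvPolynomial.X b : MvPolynomial σ F) g := by
  rw [Polynomial.aeval_eq_sum_range, Polynomial.aeval_eq_sum_range, ← Finset.sum_sub_distrib]
  simp only [← smul_sub]
  rw [Finset.sum_range_succ']
  simp only [pow_zero, sub_self, smul_zero, add_zero]
  rw [weilO2, Finset.mul_sum]
  refine Finset.sum_congr rfl fun j _ => ?_
  rw [Finset.Nat.sum_antidiagonal_eq_sum_range_succ_mk]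
  have hg : (∑ k ∈ Finset.range (j+1),
      (MvPolynomial.X a : MvPolynomial σ F) ^ k * MvPolynomial.X b ^ (j - k)) *
      (MvPolynomial.X a - MvPolynomial.X b)
      = MvPolynomial.X a ^ (j+1) - MvPolynomial.X b ^ (j+1) := by
    have := geom_sum₂_mul (MvPolynomial.X a : MvPolynomial σ F) (MvPolynomial.X b) (j+1)
    simpa using this
  rw [smul_eq_C_mul, ← hg]
  ring


/-- Let `r = m + 1 ≥ 2` and let
`P = ∏_{j=1}^{r-1} O_f^{(2)}(X_j, X_r)` in `𝔽_q[X_1,…,X_r]` (a representative of the rank-r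
Weil operator).  For every polynomial `g(X_1,…,X_r)` and every choice of indices
`β : {1,…,r} → {1,…,r}`, one has `g(X_1,…,X_r)·P ≡ g(X_{β_1},…,X_{β_r})·P Mod f(*)`,
i.e. the difference lies in the ideal generated by `f(X_1),…,f(X_r)`. -/
theorem weil_operator_change_of_index {F : Type*} [Field F] [Fintype F]
    (f : Polynomial F) (hf : f.Monic) (n : ℕ) (hn : f.natDegree = n) (hn1 : 1 ≤ n)
    (m : ℕ) (hm : 1 ≤ m)
    (g : MvPolynomial (Fin (m + 1)) F) (β : Fin (m + 1) → Fin (m + 1)) :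
    g * (∏ j : Fin m, weilO2 f (Fin.castSucc j) (Fin.last m))
      - (MvPolynomial.rename β g) * (∏ j : Fin m, weilO2 f (Fin.castSucc j) (Fin.last m))
      ∈ Ideal.span (Set.range fun i : Fin (m + 1) =>
          Polynomial.aeval (MvPolynomial.X i : MvPolynomial (Fin (m + 1)) F) f) := by
  set P := ∏ j : Fin m, weilO2 f (Fin.castSucc j) (Fin.last m) with hP
  set I := Ideal.span (Set.range fun i : Fin (m + 1) =>
      Polynomial.aeval (MvPolynomial.X i : MvPolynomial (Fin (m + 1)) F) f) with hI
  have hX : ∀ i : Fin (m+1),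
      MvPolynomial.X i * P - MvPolynomial.X (Fin.last m) * P ∈ I := by
    intro i
    induction i using Fin.lastCases with
    | last => simp
    | cast j =>
      have hfac : MvPolynomial.X (Fin.castSucc j) * P - MvPolynomial.X (Fin.last m) * P
          = (Polynomial.aeval (MvPolynomial.X (Fin.castSucc j) :
                MvPolynomial (Fin (m+1)) F) f
             - Polynomial.aeval (MvPolynomial.X (Fin.last m) :
                MvPolynomial (Fin (m+1)) F) f)
            * ∏ k ∈ Finset.univ.erase j, weilO2 f (Fin.castSucc k) (Fin.last m) := by
        rw [← weilO2_key, hP,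
          ← Finset.mul_prod_erase Finset.univ _ (Finset.mem_univ j)]
        ring
      rw [hfac]
      exact Ideal.mul_mem_right _ _
        (Ideal.sub_mem _ (Ideal.subset_span ⟨_, rfl⟩) (Ideal.subset_span ⟨_, rfl⟩))
  have hXq : ∀ i : Fin (m+1),
      Ideal.Quotient.mk I (MvPolynomial.X i * P) = Ideal.Quotient.mk I (MvPolynomial.X (Fin.last m) * P) :=
    fun i => Ideal.Quotient.eq.mpr (hX i)
  refine Ideal.Quotient.eq.mp ?_
  induction g using MvPolynomial.induction_on with
  | C a => rw [rename_C]
  | add p q hp hq =>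
      rw [map_add (rename β), add_mul, add_mul, RingHom.map_add, RingHom.map_add, hp, hq]
  | mul_X p i hp =>
      rw [map_mul (rename β), rename_X]
      calc Ideal.Quotient.mk I (p * MvPolynomial.X i * P)
          = Ideal.Quotient.mk I p * Ideal.Quotient.mk I (MvPolynomial.X i * P) := by rw [mul_assoc, map_mul]
        _ = Ideal.Quotient.mk I p * Ideal.Quotient.mk I (MvPolynomial.X (Fin.last m) * P) := by rw [hXq i]
        _ = Ideal.Quotient.mk I (p * P) * Ideal.Quotient.mk I (MvPolynomial.X (Fin.last m)) := by
              rw [map_mul, map_mul]; ring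
        _ = Ideal.Quotient.mk I (rename β p * P) * Ideal.Quotient.mk I (MvPolynomial.X (Fin.last m)) := by rw [hp]
        _ = Ideal.Quotient.mk I (rename β p) * Ideal.Quotient.mk I (MvPolynomial.X (β i) * P) := by
              rw [hXq (β i), map_mul, map_mul]; ring
        _ = Ideal.Quotient.mk I (rename β p * MvPolynomial.X (β i) * P) := by
              simp only [map_mul]; ring
end

section
/- For every 0 ≤ k ≤ n−1 one has the congruence X_1^k · O_f^{(2)}(X_1,X_2) ≡ −Σ_{i=0}^{k−1} a_i Σ_{α+β=k−i−1} X_1^{α+i} X_2^{β+i} + Σ_{i=k+1}^{n} a_i Σ_{α+β=i−k−1} X_1^{α+k} X_2^{β+k} modulo the ideal of 𝔽_q[X_1,X_2] generated by f(X_1) and f(X_2); moreover the right-hand side has degree < n in each of X_1 and X_2, so it is the unique such representative [t^k ∗ O_f^{(2)}]. -/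
open Finset MvPolynomial

private lemma geom_antidiag {R : Type*} [CommRing R] (x y : R) (m : ℕ) :
    (∑ pr ∈ Finset.HasAntidiagonal.antidiagonal m, x ^ pr.1 * y ^ pr.2) * (x - y) = x ^ (m+1) - y ^ (m+1) := by
  rw [Finset.Nat.sum_antidiagonal_eq_sum_range_succ_mk]
  have h := geom_sum₂_mul x y (m+1)
  simpa using h

private lemma weil_key {R : Type*} [CommRing R] (x y : R) (c : ℕ → R) (n k : ℕ) (hkn : k < n) :
    (x ^ k * (∑ j ∈ Finset.range n, c (j+1) * ∑ pr ∈ Finset.HasAntidiagonal.antidiagonal j, x ^ pr.1 * y ^ pr.2)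
      - ( -(∑ i ∈ Finset.range k, c i * ∑ pr ∈ Finset.HasAntidiagonal.antidiagonal (k - i - 1),
              x ^ (pr.1 + i) * y ^ (pr.2 + i))
          + ∑ i ∈ Finset.Icc (k+1) n, c i * ∑ pr ∈ Finset.HasAntidiagonal.antidiagonal (i - k - 1),
              x ^ (pr.1 + k) * y ^ (pr.2 + k))) * (x - y)
    = ((∑ s ∈ Finset.range k, x ^ (k - 1 - s) * y ^ s) *
        (∑ i ∈ Finset.range (n+1), c i * x ^ i)) * (x - y) := by
  set g : ℕ → R := fun i => c i * (x ^ i * y ^ k - x ^ k * y ^ i) with hg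
  have hS1 : (x ^ k * (∑ j ∈ Finset.range n, c (j+1) *
        ∑ pr ∈ Finset.HasAntidiagonal.antidiagonal j, x ^ pr.1 * y ^ pr.2)) * (x - y)
      = (∑ j ∈ Finset.range n, c (j+1) * (x ^ (j+1+k) - x ^ (j+1) * y ^ k))
        + ∑ j ∈ Finset.range n, g (j+1) := by
    have h0 : (x ^ k * (∑ j ∈ Finset.range n, c (j+1) *
        ∑ pr ∈ Finset.HasAntidiagonal.antidiagonal j, x ^ pr.1 * y ^ pr.2)) * (x - y)
        = ∑ j ∈ Finset.range n, c (j+1) *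
            ((∑ pr ∈ Finset.HasAntidiagonal.antidiagonal j, x ^ pr.1 * y ^ pr.2) * (x - y)) * x ^ k := by
      rw [Finset.mul_sum, Finset.sum_mul]
      exact Finset.sum_congr rfl fun j _ => by ring
    rw [h0, ← Finset.sum_add_distrib]
    refine Finset.sum_congr rfl fun j _ => ?_
    rw [geom_antidiag]
    simp only [hg]
    ring
  have hS2 : (∑ i ∈ Finset.range k, c i * ∑ pr ∈ Finset.HasAntidiagonal.antidiagonal (k - i - 1),
        x ^ (pr.1 + i) * y ^ (pr.2 + i)) * (x - y)
      = -∑ i ∈ Finset.range k, g i := by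
    rw [Finset.sum_mul, ← Finset.sum_neg_distrib]
    refine Finset.sum_congr rfl fun i hi => ?_
    have hik : i < k := Finset.mem_range.mp hi
    have e1 : (∑ pr ∈ Finset.HasAntidiagonal.antidiagonal (k - i - 1), x ^ (pr.1 + i) * y ^ (pr.2 + i))
        = x ^ i * y ^ i * ∑ pr ∈ Finset.HasAntidiagonal.antidiagonal (k - i - 1), x ^ pr.1 * y ^ pr.2 := by
      rw [Finset.mul_sum]
      exact Finset.sum_congr rfl fun pr _ => by rw [pow_add, pow_add]; ring
    have e2 : (∑ pr ∈ Finset.HasAntidiagonal.antidiagonal (k - i - 1), x ^ pr.1 * y ^ pr.2) * (x - y)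
        = x ^ (k - i) - y ^ (k - i) := by
      have h := geom_antidiag x y (k - i - 1)
      rwa [show k - i - 1 + 1 = k - i by omega] at h
    have hx : x ^ i * x ^ (k - i) = x ^ k := by rw [← pow_add]; congr 1; omega
    have hy : y ^ i * y ^ (k - i) = y ^ k := by rw [← pow_add]; congr 1; omega
    calc (c i * ∑ pr ∈ Finset.HasAntidiagonal.antidiagonal (k - i - 1),
            x ^ (pr.1 + i) * y ^ (pr.2 + i)) * (x - y)
        = c i * (x ^ i * y ^ i *
            ((∑ pr ∈ Finset.HasAntidiagonal.antidiagonal (k - i - 1), x ^ pr.1 * y ^ pr.2) * (x - y))) := by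
          rw [e1]; ring
      _ = c i * (x ^ i * y ^ i * (x ^ (k - i) - y ^ (k - i))) := by rw [e2]
      _ = -g i := by
          simp only [hg]
          linear_combination (c i * y ^ i) * hx - (c i * x ^ i) * hy
  have hS3 : (∑ i ∈ Finset.Icc (k+1) n, c i * ∑ pr ∈ Finset.HasAntidiagonal.antidiagonal (i - k - 1),
        x ^ (pr.1 + k) * y ^ (pr.2 + k)) * (x - y)
      = ∑ i ∈ Finset.Icc (k+1) n, g i := by
    rw [Finset.sum_mul]
    refine Finset.sum_congr rfl fun i hi => ?_
    have hik : k + 1 ≤ i := (Finset.mem_Icc.mp hi).1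
    have e1 : (∑ pr ∈ Finset.HasAntidiagonal.antidiagonal (i - k - 1), x ^ (pr.1 + k) * y ^ (pr.2 + k))
        = x ^ k * y ^ k * ∑ pr ∈ Finset.HasAntidiagonal.antidiagonal (i - k - 1), x ^ pr.1 * y ^ pr.2 := by
      rw [Finset.mul_sum]
      exact Finset.sum_congr rfl fun pr _ => by rw [pow_add, pow_add]; ring
    have e2 : (∑ pr ∈ Finset.HasAntidiagonal.antidiagonal (i - k - 1), x ^ pr.1 * y ^ pr.2) * (x - y)
        = x ^ (i - k) - y ^ (i - k) := by
      have h := geom_antidiag x y (i - k - 1)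
      rwa [show i - k - 1 + 1 = i - k by omega] at h
    have hx : x ^ k * x ^ (i - k) = x ^ i := by rw [← pow_add]; congr 1; omega
    have hy : y ^ k * y ^ (i - k) = y ^ i := by rw [← pow_add]; congr 1; omega
    calc (c i * ∑ pr ∈ Finset.HasAntidiagonal.antidiagonal (i - k - 1),
            x ^ (pr.1 + k) * y ^ (pr.2 + k)) * (x - y)
        = c i * (x ^ k * y ^ k *
            ((∑ pr ∈ Finset.HasAntidiagonal.antidiagonal (i - k - 1), x ^ pr.1 * y ^ pr.2) * (x - y))) := by
          rw [e1]; ring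
      _ = c i * (x ^ k * y ^ k * (x ^ (i - k) - y ^ (i - k))) := by rw [e2]
      _ = g i := by
          simp only [hg]
          linear_combination (c i * y ^ k) * hx - (c i * x ^ k) * hy
  have hH : (∑ s ∈ Finset.range k, x ^ (k - 1 - s) * y ^ s) * (x - y) = x ^ k - y ^ k := by
    have hrev : (∑ s ∈ Finset.range k, x ^ (k - 1 - s) * y ^ s)
        = ∑ s ∈ Finset.range k, x ^ s * y ^ (k - 1 - s) := by
      rw [← Finset.sum_range_reflect (fun s => x ^ s * y ^ (k - 1 - s)) k]
      refine Finset.sum_congr rfl fun j hj => ?_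
      have : j < k := Finset.mem_range.mp hj
      rw [show k - 1 - (k - 1 - j) = j by omega]
    rw [hrev]
    exact geom_sum₂_mul x y k
  have hS4 : ((∑ s ∈ Finset.range k, x ^ (k - 1 - s) * y ^ s) *
        (∑ i ∈ Finset.range (n+1), c i * x ^ i)) * (x - y)
      = c 0 * (x ^ k - y ^ k)
        + ∑ j ∈ Finset.range n, c (j+1) * (x ^ (j+1+k) - x ^ (j+1) * y ^ k) := by
    have h0 : ((∑ s ∈ Finset.range k, x ^ (k - 1 - s) * y ^ s) *
          (∑ i ∈ Finset.range (n+1), c i * x ^ i)) * (x - y)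
        = (∑ i ∈ Finset.range (n+1), c i * x ^ i) *
            ((∑ s ∈ Finset.range k, x ^ (k - 1 - s) * y ^ s) * (x - y)) := by ring
    rw [h0, hH, Finset.sum_mul, Finset.sum_range_succ']
    rw [add_comm]
    congr 1
    · ring
    · exact Finset.sum_congr rfl fun j _ => by ring
  have hM : ∑ i ∈ Finset.range (n+1), g i = g 0 + ∑ j ∈ Finset.range n, g (j+1) := by
    rw [Finset.sum_range_succ', add_comm]
  have hM2 : ∑ i ∈ Finset.range (n+1), g i
      = (∑ i ∈ Finset.range k, g i) + g k + ∑ i ∈ Finset.Icc (k+1) n, g i := by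
    have h0 := Finset.sum_Ico_consecutive g (Nat.zero_le (k+1)) (show k+1 ≤ n+1 by omega)
    rw [← Finset.range_eq_Ico, ← Finset.range_eq_Ico] at h0
    rw [← h0, Finset.sum_range_succ, Finset.Ico_add_one_right_eq_Icc]
  have hgk : g k = 0 := by simp only [hg]; ring
  have hg0 : g 0 = c 0 * (y ^ k - x ^ k) := by simp only [hg]; ring
  rw [sub_mul, add_mul, neg_mul]
  linear_combination hS1 + hS2 - hS3 - hS4 + hM2 - hM + hgk - hg0

private lemma deg_XX_le {F : Type*} [Field F] (v : Fin 2) (a b d : ℕ) (ha : a ≤ d) (hb : b ≤ d) :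
    MvPolynomial.degreeOf v
      ((MvPolynomial.X 0 : MvPolynomial (Fin 2) F) ^ a * MvPolynomial.X 1 ^ b) ≤ d := by
  have h0 : ∀ (w : Fin 2) (e : ℕ), MvPolynomial.degreeOf v
      ((MvPolynomial.X w : MvPolynomial (Fin 2) F) ^ e) ≤ e * (if v = w then 1 else 0) := by
    intro w e
    refine le_trans (MvPolynomial.degreeOf_pow_le _ _ _) ?_
    rw [MvPolynomial.degreeOf_X]
  refine le_trans (MvPolynomial.degreeOf_mul_le _ _ _) ?_
  have ha' := h0 0 a
  have hb' := h0 1 b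
  have hv : v = 0 ∨ v = 1 := by
    rcases v with ⟨(_ | _ | m), hm⟩
    · exact Or.inl rfl
    · exact Or.inr rfl
    · omega
  rcases hv with rfl | rfl <;> simp at ha' hb' ⊢ <;> omega

/-- For every `0 ≤ k ≤ n-1` one has
`X_1^k · O_f^{(2)}(X_1,X_2) ≡ −∑_{i=0}^{k-1} a_i ∑_{α+β=k-i-1} X_1^{α+i} X_2^{β+i}
  + ∑_{i=k+1}^{n} a_i ∑_{α+β=i-k-1} X_1^{α+k} X_2^{β+k}`
modulo the ideal generated by `f(X_1)` and `f(X_2)`; moreover the right-hand side has degree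
`< n` in each of `X_1, X_2`, so it is the unique such representative `[t^k ∗ O_f^{(2)}]`. -/
theorem weil_operator_tk_action {F : Type*} [Field F] [Fintype F]
    (f : Polynomial F) (hf : f.Monic) (n : ℕ) (hn : f.natDegree = n) (hn1 : 1 ≤ n)
    (k : ℕ) (hk : k ≤ n - 1)
    (RHS : MvPolynomial (Fin 2) F)
    (hRHS : RHS =
      -(∑ i ∈ Finset.range k, MvPolynomial.C (f.coeff i) *
          ∑ pr ∈ Finset.HasAntidiagonal.antidiagonal (k - i - 1),
            MvPolynomial.X 0 ^ (pr.1 + i) * MvPolynomial.X 1 ^ (pr.2 + i))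
      + ∑ i ∈ Finset.Icc (k + 1) n, MvPolynomial.C (f.coeff i) *
          ∑ pr ∈ Finset.HasAntidiagonal.antidiagonal (i - k - 1),
            MvPolynomial.X 0 ^ (pr.1 + k) * MvPolynomial.X 1 ^ (pr.2 + k)) :
    (MvPolynomial.X 0 ^ k * weilO2 f (0 : Fin 2) 1 - RHS
      ∈ Ideal.span {Polynomial.aeval (MvPolynomial.X 0 : MvPolynomial (Fin 2) F) f,
          Polynomial.aeval (MvPolynomial.X 1 : MvPolynomial (Fin 2) F) f})
    ∧ (∀ v : Fin 2, MvPolynomial.degreeOf v RHS < n) := by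
  have hkn : k < n := by omega
  constructor
  · -- the difference equals H * f(X₀)
    have haeval : Polynomial.aeval (MvPolynomial.X 0 : MvPolynomial (Fin 2) F) f
        = ∑ i ∈ Finset.range (n+1),
            MvPolynomial.C (f.coeff i) * MvPolynomial.X 0 ^ i := by
      rw [Polynomial.aeval_eq_sum_range, hn]
      exact Finset.sum_congr rfl fun i _ => by rw [MvPolynomial.smul_eq_C_mul]
    have hne : (MvPolynomial.X 0 : MvPolynomial (Fin 2) F) - MvPolynomial.X 1 ≠ 0 := by
      rw [sub_ne_zero]
      exact MvPolynomial.X_injective.ne (by decide)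
    have hEq : MvPolynomial.X 0 ^ k * weilO2 f (0 : Fin 2) 1 - RHS
        = (∑ s ∈ Finset.range k,
            (MvPolynomial.X 0 : MvPolynomial (Fin 2) F) ^ (k - 1 - s) * MvPolynomial.X 1 ^ s) *
          Polynomial.aeval (MvPolynomial.X 0 : MvPolynomial (Fin 2) F) f := by
      apply mul_right_cancel₀ hne
      rw [hRHS, haeval, weilO2, hn]
      exact weil_key (MvPolynomial.X 0) (MvPolynomial.X 1)
        (fun i => MvPolynomial.C (f.coeff i)) n k hkn
    rw [hEq]
    exact Ideal.mul_mem_left _ _ (Ideal.subset_span (by simp))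
  · intro v
    have hlt : n - 1 < n := by omega
    refine lt_of_le_of_lt ?_ hlt
    rw [hRHS]
    refine le_trans (MvPolynomial.degreeOf_add_le _ _ _) (max_le ?_ ?_)
    · rw [MvPolynomial.degreeOf_neg]
      refine le_trans (MvPolynomial.degreeOf_sum_le _ _ _) (Finset.sup_le fun i hi => ?_)
      have hik : i < k := Finset.mem_range.mp hi
      refine le_trans (MvPolynomial.degreeOf_mul_le _ _ _) ?_
      rw [MvPolynomial.degreeOf_C]
      rw [zero_add]
      refine le_trans (MvPolynomial.degreeOf_sum_le _ _ _) (Finset.sup_le fun pr hpr => ?_)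
      have hpr' := Finset.HasAntidiagonal.mem_antidiagonal.mp hpr
      exact deg_XX_le v _ _ _ (by omega) (by omega)
    · refine le_trans (MvPolynomial.degreeOf_sum_le _ _ _) (Finset.sup_le fun i hi => ?_)
      have hik := Finset.mem_Icc.mp hi
      refine le_trans (MvPolynomial.degreeOf_mul_le _ _ _) ?_
      rw [MvPolynomial.degreeOf_C]
      rw [zero_add]
      refine le_trans (MvPolynomial.degreeOf_sum_le _ _ _) (Finset.sup_le fun pr hpr => ?_)
      have hpr' := Finset.HasAntidiagonal.mem_antidiagonal.mp hpr
      exact deg_XX_le v _ _ _ (by omega) (by omega)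
end

section
/- Let r ≥ 2 and let G and G' be two connected undirected graphs on the vertex set {1,…,r}, each having exactly r−1 edges (i.e., two trees on {1,…,r}). Then Π_{{α,β} ∈ E(G)} O_f^{(2)}(X_α, X_β) ≡ Π_{{α,β} ∈ E(G')} O_f^{(2)}(X_α, X_β) Mod f(*); that is, the product of rank-two Weil operators over the edges of a spanning tree, taken modulo the ideal (f(X_1),…,f(X_r)), does not depend on the choice of tree. -/
open Finset MvPolynomial

section AlgebraAux

variable {F : Type*} [Field F] {σ : Type*}

lemma weilO2_symm (g : Polynomial F) (x y : σ) : weilO2 g x y = weilO2 g y x := by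
  unfold weilO2
  refine Finset.sum_congr rfl fun j _ => ?_
  congr 1
  conv_lhs => rw [← Finset.HasAntidiagonal.map_swap_antidiagonal]
  rw [Finset.sum_map]
  refine Finset.sum_congr rfl fun pr _ => ?_
  simp [mul_comm]

lemma antidiag_mul (x y : MvPolynomial σ F) (j : ℕ) :
    (∑ pr ∈ Finset.HasAntidiagonal.antidiagonal j, x ^ pr.1 * y ^ pr.2) * (x - y) = x ^ (j+1) - y ^ (j+1) := by
  rw [Finset.Nat.sum_antidiagonal_eq_sum_range_succ_mk]
  have := geom_sum₂_mul x y (j+1)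
  simpa using this

lemma weilO2_mul_sub (g : Polynomial F) (x y : σ) :
    weilO2 g x y * (MvPolynomial.X x - MvPolynomial.X y) =
      Polynomial.aeval (MvPolynomial.X x : MvPolynomial σ F) g -
      Polynomial.aeval (MvPolynomial.X y : MvPolynomial σ F) g := by
  rw [Polynomial.aeval_eq_sum_range, Polynomial.aeval_eq_sum_range, ← Finset.sum_sub_distrib,
    Finset.sum_range_succ']
  simp only [pow_zero, sub_self, add_zero]
  unfold weilO2
  rw [Finset.sum_mul]
  refine Finset.sum_congr rfl fun j _ => ?_
  rw [mul_assoc, antidiag_mul, ← smul_sub, MvPolynomial.smul_eq_C_mul]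

lemma sub_dvd_weilO2_sub (g : Polynomial F) (x y z : σ) :
    (MvPolynomial.X y - MvPolynomial.X z : MvPolynomial σ F) ∣ weilO2 g x y - weilO2 g x z := by
  unfold weilO2
  rw [← Finset.sum_sub_distrib]
  refine Finset.dvd_sum fun j _ => ?_
  rw [← mul_sub, ← Finset.sum_sub_distrib]
  refine Dvd.dvd.mul_left (Finset.dvd_sum fun pr _ => ?_) _
  rw [← mul_sub]
  exact Dvd.dvd.mul_left (sub_dvd_pow_sub_pow _ _ _) _

lemma key_mem (f : Polynomial F) {r : ℕ} (x y z : Fin r) :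
    (weilO2 f x y - weilO2 f x z) * weilO2 f y z
      ∈ Ideal.span (Set.range fun i : Fin r =>
          Polynomial.aeval (MvPolynomial.X i : MvPolynomial (Fin r) F) f) := by
  obtain ⟨Q, hQ⟩ := sub_dvd_weilO2_sub f x y z
  rw [hQ, mul_comm (MvPolynomial.X y - MvPolynomial.X z) Q, mul_assoc,
    mul_comm (MvPolynomial.X y - MvPolynomial.X z) (weilO2 f y z), weilO2_mul_sub, mul_sub]
  exact sub_mem (Ideal.mul_mem_left _ _ (Ideal.subset_span ⟨y, rfl⟩))
    (Ideal.mul_mem_left _ _ (Ideal.subset_span ⟨z, rfl⟩))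

end AlgebraAux

set_option linter.unnecessarySimpa false in
/-- Any "rooted forest" product of Weil operators is congruent to the star product,
by induction on the total depth. -/
lemma star_reduce {F : Type*} [Field F] {r : ℕ} [NeZero r] (f : Polynomial F) :
    ∀ (N : ℕ) (p : Fin r → Fin r) (d : Fin r → ℕ),
      (∀ v, v ≠ 0 → d (p v) < d v) →
      (∑ v ∈ Finset.univ.erase (0 : Fin r), d v) ≤ N →
      (∏ v ∈ Finset.univ.erase (0:Fin r), weilO2 f v (p v)) -
      (∏ v ∈ Finset.univ.erase (0:Fin r), weilO2 f v 0)
        ∈ Ideal.span (Set.range fun i : Fin r =>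
            Polynomial.aeval (MvPolynomial.X i : MvPolynomial (Fin r) F) f) := by
  intro N
  induction N with
  | zero =>
    intro p d hd hsum
    have hall : ∀ v ∈ Finset.univ.erase (0:Fin r), p v = 0 := by
      intro v hv
      exfalso
      have hdv : d v ≤ 0 :=
        le_trans (Finset.single_le_sum (f := d) (fun i _ => Nat.zero_le _) hv) hsum
      have := hd v (Finset.ne_of_mem_erase hv)
      omega
    rw [Finset.prod_congr rfl fun v hv => by rw [hall v hv]]
    simpa using Ideal.zero_mem _
  | succ N ih =>
    intro p d hd hsum
    by_cases hall : ∀ v ∈ Finset.univ.erase (0:Fin r), p v = 0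
    · rw [Finset.prod_congr rfl fun v hv => by rw [hall v hv]]
      simpa using Ideal.zero_mem _
    · push_neg at hall
      obtain ⟨v, hvS, hpv⟩ := hall
      have hv0 : v ≠ 0 := Finset.ne_of_mem_erase hvS
      have h1 : d (p v) < d v := hd v hv0
      have h2 : d (p (p v)) < d (p v) := hd (p v) hpv
      have hpvv : p v ≠ v := by intro h; rw [h] at h1; omega
      have hppv : p (p v) ≠ v := by intro h; rw [h] at h2; omega
      set S := Finset.univ.erase (0:Fin r) with hS
      have hpvS : p v ∈ S.erase v :=
        Finset.mem_erase.mpr ⟨hpvv, Finset.mem_erase.mpr ⟨hpv, Finset.mem_univ _⟩⟩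
      set p' := Function.update p v (p (p v)) with hp'
      set d' := Function.update d v (d (p v)) with hd'def
      have hd'cond : ∀ w, w ≠ 0 → d' (p' w) < d' w := by
        intro w hw0
        by_cases hwv : w = v
        · subst hwv
          simp only [hp', hd'def, Function.update_self, Function.update_of_ne hppv]
          exact h2
        · have hdw := hd w hw0
          by_cases hpwv : p w = v
          · simp only [hp', hd'def, Function.update_of_ne hwv, hpwv, Function.update_self]
            rw [hpwv] at hdw
            omega
          · simp only [hp', hd'def, Function.update_of_ne hwv, Function.update_of_ne hpwv]
            exact hdw
      have hsum' : (∑ w ∈ S, d' w) ≤ N := by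
        have he : (∑ w ∈ S, d' w) + d v = (∑ w ∈ S, d w) + d (p v) := by
          rw [← Finset.add_sum_erase S d' hvS, ← Finset.add_sum_erase S d hvS,
            Finset.sum_congr rfl (fun w hw =>
              Function.update_of_ne (Finset.ne_of_mem_erase hw) _ d)]
          simp only [hd'def, Function.update_self]
          ring
        omega
      have step : (∏ w ∈ S, weilO2 f w (p w)) - (∏ w ∈ S, weilO2 f w (p' w))
          ∈ Ideal.span (Set.range fun i : Fin r =>
            Polynomial.aeval (MvPolynomial.X i : MvPolynomial (Fin r) F) f) := by
        have e1 : (∏ w ∈ S, weilO2 f w (p w))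
            = weilO2 f v (p v) * (weilO2 f (p v) (p (p v)) *
                ∏ w ∈ (S.erase v).erase (p v), weilO2 f w (p w)) := by
          rw [Finset.mul_prod_erase (S.erase v) (fun w => weilO2 f w (p w)) hpvS,
              Finset.mul_prod_erase S (fun w => weilO2 f w (p w)) hvS]
        have e2 : (∏ w ∈ S, weilO2 f w (p' w))
            = weilO2 f v (p (p v)) * (weilO2 f (p v) (p (p v)) *
                ∏ w ∈ (S.erase v).erase (p v), weilO2 f w (p w)) := by
          rw [show (∏ w ∈ (S.erase v).erase (p v), weilO2 f w (p w))
              = ∏ w ∈ (S.erase v).erase (p v), weilO2 f w (p' w) from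
            Finset.prod_congr rfl fun w hw => by
              rw [hp', Function.update_of_ne
                (Finset.ne_of_mem_erase (Finset.mem_of_mem_erase hw))]]
          rw [show weilO2 f (p v) (p (p v)) = weilO2 f (p v) (p' (p v)) by
            rw [hp', Function.update_of_ne hpvv]]
          rw [show weilO2 f v (p (p v)) = weilO2 f v (p' v) by
            rw [hp', Function.update_self]]
          rw [Finset.mul_prod_erase (S.erase v) (fun w => weilO2 f w (p' w)) hpvS,
              Finset.mul_prod_erase S (fun w => weilO2 f w (p' w)) hvS]
        rw [e1, e2, show weilO2 f v (p v) * (weilO2 f (p v) (p (p v)) *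
              ∏ w ∈ (S.erase v).erase (p v), weilO2 f w (p w))
            - weilO2 f v (p (p v)) * (weilO2 f (p v) (p (p v)) *
              ∏ w ∈ (S.erase v).erase (p v), weilO2 f w (p w))
            = ((weilO2 f v (p v) - weilO2 f v (p (p v))) * weilO2 f (p v) (p (p v)))
              * ∏ w ∈ (S.erase v).erase (p v), weilO2 f w (p w) by ring]
        exact Ideal.mul_mem_right _ _ (key_mem f v (p v) (p (p v)))
      have tail := ih p' d' hd'cond hsum'
      simpa using add_mem step tail

/-- For a connected graph, each nonzero vertex has a neighbour strictly closer to `0`. -/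
lemma exists_parent {r : ℕ} [NeZero r] (G : SimpleGraph (Fin r)) (hconn : G.Connected)
    (v : Fin r) (hv : v ≠ 0) : ∃ u, G.Adj v u ∧ G.dist u 0 < G.dist v 0 := by
  have hdist : G.dist v 0 ≠ 0 :=
    SimpleGraph.dist_ne_zero_iff_ne_and_reachable.mpr ⟨hv, hconn.preconnected v 0⟩
  obtain ⟨w, hw⟩ := SimpleGraph.exists_walk_of_dist_ne_zero hdist
  cases w with
  | nil => simp at hw; simp at hdist
  | @cons _ u _ h q =>
    refine ⟨u, h, ?_⟩
    have h1 : G.dist u 0 ≤ q.length := SimpleGraph.dist_le q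
    simp only [SimpleGraph.Walk.length_cons] at hw
    omega

/-- Rewriting the product over the edges of a tree as a product over nonzero vertices
via the parent map. -/
lemma prod_edges_eq {F : Type*} [Field F] {r : ℕ} [NeZero r] (f : Polynomial F)
    (G : SimpleGraph (Fin r)) [DecidableRel G.Adj]
    (hcard : G.edgeFinset.card = r - 1)
    (u : Fin r → Fin r) (hadj : ∀ v : Fin r, v ≠ 0 → G.Adj v (u v))
    (hdec : ∀ v : Fin r, v ≠ 0 → G.dist (u v) 0 < G.dist v 0)
    (a b : Sym2 (Fin r) → Fin r) (hab : ∀ e : Sym2 (Fin r), e = Sym2.mk (a e) (b e)) :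
    (∏ e ∈ G.edgeFinset, weilO2 f (a e) (b e))
      = ∏ v ∈ Finset.univ.erase (0 : Fin r), weilO2 f v (u v) := by
  have hScard : (Finset.univ.erase (0 : Fin r)).card = r - 1 := by
    rw [Finset.card_erase_of_mem (Finset.mem_univ _)]
    simp
  have hmem : ∀ v ∈ Finset.univ.erase (0 : Fin r), s(v, u v) ∈ G.edgeFinset := by
    intro v hv
    rw [SimpleGraph.mem_edgeFinset, SimpleGraph.mem_edgeSet]
    exact hadj v (Finset.ne_of_mem_erase hv)
  have hinj : ∀ v ∈ Finset.univ.erase (0 : Fin r), ∀ w ∈ Finset.univ.erase (0 : Fin r),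
      s(v, u v) = s(w, u w) → v = w := by
    intro v hv w hw h
    rw [Sym2.eq_iff] at h
    rcases h with ⟨h1, _⟩ | ⟨h1, h2⟩
    · exact h1
    · exfalso
      have d1 := hdec v (Finset.ne_of_mem_erase hv)
      have d2 := hdec w (Finset.ne_of_mem_erase hw)
      rw [h2] at d1
      rw [← h1] at d2
      omega
  refine (Finset.prod_bij (fun v _ => s(v, u v)) hmem hinj ?_ ?_).symm
  · intro e he
    have := Finset.surj_on_of_inj_on_of_card_le (fun v _ => s(v, u v)) hmem
      (fun v w hv hw => hinj v hv w hw) (by rw [hScard, hcard]) e he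
    obtain ⟨v, hv, hveq⟩ := this
    exact ⟨v, hv, hveq.symm⟩
  · intro v hv
    have he := hab s(v, u v)
    rw [Sym2.eq_iff] at he
    rcases he with ⟨h1, h2⟩ | ⟨h1, h2⟩
    · rw [← h1, ← h2]
    · rw [← h1, ← h2, weilO2_symm]

/-- Let `r ≥ 2` and let `G`, `G'` be two connected undirected graphs on the vertex
set `{1,…,r}`, each with exactly `r-1` edges (i.e. two trees).  Then
`∏_{{α,β} ∈ E(G)} O_f^{(2)}(X_α, X_β) ≡ ∏_{{α,β} ∈ E(G')} O_f^{(2)}(X_α, X_β) Mod f(*)`.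
Each unordered edge `e` is written as `e = s(a e, b e)` via a fixed choice of representatives
`a, b` (the factor is well defined since `O_f^{(2)}` is symmetric in its two arguments). -/
theorem weil_operator_tree_independence {F : Type*} [Field F] [Fintype F]
    (f : Polynomial F) (hf : f.Monic) (n : ℕ) (hn : f.natDegree = n) (hn1 : 1 ≤ n)
    (r : ℕ) (hr : 2 ≤ r)
    (G G' : SimpleGraph (Fin r)) [DecidableRel G.Adj] [DecidableRel G'.Adj]
    (hG : G.Connected) (hG' : G'.Connected)
    (hGcard : G.edgeFinset.card = r - 1) (hG'card : G'.edgeFinset.card = r - 1)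
    (a b : Sym2 (Fin r) → Fin r) (hab : ∀ e : Sym2 (Fin r), e = Sym2.mk (a e) (b e)) :
    (∏ e ∈ G.edgeFinset, weilO2 f (a e) (b e))
      - (∏ e ∈ G'.edgeFinset, weilO2 f (a e) (b e))
      ∈ Ideal.span (Set.range fun i : Fin r =>
          Polynomial.aeval (MvPolynomial.X i : MvPolynomial (Fin r) F) f) := by
  haveI : NeZero r := ⟨by omega⟩
  have key : ∀ (H : SimpleGraph (Fin r)) [DecidableRel H.Adj], H.Connected →
      H.edgeFinset.card = r - 1 →
      (∏ e ∈ H.edgeFinset, weilO2 f (a e) (b e))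
        - (∏ v ∈ Finset.univ.erase (0:Fin r), weilO2 f v 0)
        ∈ Ideal.span (Set.range fun i : Fin r =>
            Polynomial.aeval (MvPolynomial.X i : MvPolynomial (Fin r) F) f) := by
    intro H instH hconn hcard
    choose! u hadj hdec using exists_parent H hconn
    rw [prod_edges_eq f H hcard u hadj hdec a b hab]
    exact star_reduce f (∑ v ∈ Finset.univ.erase (0:Fin r), H.dist v 0) u
      (fun v => H.dist v 0) hdec le_rfl
  have h1 := key G hG hGcard
  have h2 := key G' hG' hG'card
  have := sub_mem h1 h2
  rwa [sub_sub_sub_cancel_right] at this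
end

section
/- In 𝔽_q[X_1,X_2,X_3], modulo the ideal generated by f(X_1), f(X_2), f(X_3), one has O_f^{(2)}(X_1,X_3)·O_f^{(2)}(X_2,X_3) ≡ Σ_{k=0}^{n−1} Σ_{i=k+1}^{n} Σ_{j=0}^{n−k−1} Σ_{α=0}^{i−k−1} a_i a_{k+j+1} X_1^{α+k} X_2^{i−1−α} X_3^{j} − Σ_{k=0}^{n−1} Σ_{i=0}^{k−1} Σ_{j=0}^{n−k−1} Σ_{α=0}^{k−1−i} a_i a_{k+j+1} X_1^{α+i} X_2^{k−1−α} X_3^{j}; this explicit right-hand side is the rank-three Weil operator O_f^{(3)}(X_1,X_2,X_3). -/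
open Finset MvPolynomial

section Aux

variable {F : Type*} [Field F]

/-- geometric sum over antidiagonal -/
lemma weil_geom_antidiag {σ : Type*} (x y : MvPolynomial σ F) (d : ℕ) :
    (x - y) * ∑ pr ∈ Finset.HasAntidiagonal.antidiagonal d, x ^ pr.1 * y ^ pr.2
      = x ^ (d + 1) - y ^ (d + 1) := by
  rw [Finset.Nat.sum_antidiagonal_eq_sum_range_succ_mk, mul_comm]
  simpa using geom_sum₂_mul x y (d + 1)

/-- representation of `aeval (X v) f` as a finite sum -/
lemma weil_aeval_X {σ : Type*} (f : Polynomial F) (v : σ) :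
    Polynomial.aeval (X v : MvPolynomial σ F) f
      = ∑ i ∈ Finset.range (f.natDegree + 1), C (f.coeff i) * X v ^ i := by
  rw [Polynomial.aeval_eq_sum_range]
  exact Finset.sum_congr rfl fun i _ => by rw [smul_eq_C_mul]

/-- key identity: `(X a - X b) * O2(a,b) = f(X a) - f(X b)` -/
lemma weil_L2 {σ : Type*} (f : Polynomial F) (a b : σ) :
    (X a - X b) * weilO2 f a b
      = Polynomial.aeval (X a : MvPolynomial σ F) f - Polynomial.aeval (X b) f := by
  rw [weil_aeval_X, weil_aeval_X, weilO2, Finset.mul_sum, ← Finset.sum_sub_distrib,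
    Finset.sum_range_succ']
  simp only [pow_zero, mul_one, sub_self, add_zero]
  refine Finset.sum_congr rfl fun j _ => ?_
  rw [mul_left_comm, weil_geom_antidiag, mul_sub]

lemma weil_tele {σ : Type*} (x y : MvPolynomial σ F) (u v L : ℕ) :
    (x - y) * ∑ α ∈ Finset.range L, x ^ (u + α) * y ^ (v + (L - 1 - α))
      = x ^ u * y ^ v * (x ^ L - y ^ L) := by
  have h : ∑ α ∈ Finset.range L, x ^ (u + α) * y ^ (v + (L - 1 - α))
      = x ^ u * y ^ v * ∑ α ∈ Finset.range L, x ^ α * y ^ (L - 1 - α) := by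
    rw [Finset.mul_sum]
    exact Finset.sum_congr rfl fun α _ => by rw [pow_add, pow_add]; ring
  rw [h, mul_left_comm, mul_comm (x - y), geom_sum₂_mul]

/-- factored form of the rank-two operator -/
lemma weil_A {σ : Type*} (f : Polynomial F) (b c : σ) :
    ∑ k ∈ Finset.range f.natDegree,
        (∑ j ∈ Finset.range (f.natDegree - k), C (f.coeff (k + j + 1)) * X c ^ j) * X b ^ k
      = weilO2 f b c := by
  set n := f.natDegree
  calc ∑ k ∈ Finset.range n,
        (∑ j ∈ Finset.range (n - k), C (f.coeff (k + j + 1)) * X c ^ j) * X b ^ k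
      = ∑ k ∈ Finset.range n, ∑ j ∈ Finset.range (n - k),
          C (f.coeff (k + j + 1)) * X c ^ j * X b ^ k := by
        exact Finset.sum_congr rfl fun k _ => Finset.sum_mul ..
    _ = ∑ j' ∈ Finset.range n, ∑ α ∈ Finset.range (j' + 1),
          C (f.coeff (j' + 1)) * X c ^ (j' - α) * X b ^ α := by
        rw [Finset.sum_sigma', Finset.sum_sigma']
        refine Finset.sum_nbij' (fun p => ⟨p.1 + p.2, p.1⟩) (fun p => ⟨p.2, p.1 - p.2⟩)
          ?_ ?_ ?_ ?_ ?_
        · rintro ⟨k, j⟩ hp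
          simp only [Finset.mem_sigma, Finset.mem_range] at *
          omega
        · rintro ⟨j', α⟩ hp
          simp only [Finset.mem_sigma, Finset.mem_range] at *
          omega
        · rintro ⟨k, j⟩ hp
          simp
        · rintro ⟨j', α⟩ hp
          simp only [Finset.mem_sigma, Finset.mem_range] at hp
          have h : α + (j' - α) = j' := by omega
          simp [h]
        · rintro ⟨k, j⟩ hp
          simp
    _ = weilO2 f b c := by
        rw [weilO2]
        refine Finset.sum_congr rfl fun j' _ => ?_
        rw [Finset.Nat.sum_antidiagonal_eq_sum_range_succ_mk, Finset.mul_sum]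
        exact Finset.sum_congr rfl fun α _ => by ring

/-- the quotient witness for `O2(0,2) - O2(1,2)` divided by `X 0 - X 1` -/
noncomputable def weilQ {F : Type*} [Field F] (f : Polynomial F) : MvPolynomial (Fin 3) F :=
  ∑ j ∈ Finset.range f.natDegree,
    C (f.coeff (j + 1)) *
      ∑ pr ∈ Finset.HasAntidiagonal.antidiagonal j,
        (∑ α ∈ Finset.range pr.1, X 0 ^ α * X 1 ^ (pr.1 - 1 - α)) * X 2 ^ pr.2

lemma weil_Q {F : Type*} [Field F] (f : Polynomial F) :
    (X 0 - X 1 : MvPolynomial (Fin 3) F) * weilQ f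
      = weilO2 f (0 : Fin 3) 2 - weilO2 f (1 : Fin 3) 2 := by
  rw [weilQ, weilO2, weilO2, Finset.mul_sum, ← Finset.sum_sub_distrib]
  refine Finset.sum_congr rfl fun j _ => ?_
  rw [← mul_sub, ← Finset.sum_sub_distrib, mul_left_comm, Finset.mul_sum]
  congr 1
  refine Finset.sum_congr rfl fun pr _ => ?_
  have hgeo : (X 0 - X 1 : MvPolynomial (Fin 3) F) *
      ∑ α ∈ Finset.range pr.1, X 0 ^ α * X 1 ^ (pr.1 - 1 - α)
      = X 0 ^ pr.1 - X 1 ^ pr.1 := by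
    rw [mul_comm]; exact geom_sum₂_mul _ _ _
  rw [← mul_assoc, hgeo, sub_mul]

/-- bound on the degree of a sum -/
lemma weil_deg_sum_lt {F : Type*} [Field F] {ι : Type*} (v : Fin 3) {N : ℕ} (hN : 0 < N)
    (s : Finset ι) (g : ι → MvPolynomial (Fin 3) F) (h : ∀ i ∈ s, degreeOf v (g i) < N) :
    degreeOf v (∑ i ∈ s, g i) < N :=
  lt_of_le_of_lt (degreeOf_sum_le v s g) ((Finset.sup_lt_iff hN).mpr h)

/-- degree bound for a single monomial term -/
lemma weil_deg_term (v : Fin 3) (c : F) (a b e : ℕ) :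
    degreeOf v (C c * X 0 ^ a * X 1 ^ b * X 2 ^ e : MvPolynomial (Fin 3) F)
      ≤ if v = 0 then a else if v = 1 then b else e := by
  have hp : ∀ (i : Fin 3) (m : ℕ),
      degreeOf v ((X i : MvPolynomial (Fin 3) F) ^ m) ≤ if v = i then m else 0 := by
    intro i m
    refine le_trans (degreeOf_pow_le _ _ _) ?_
    rw [degreeOf_X]
    split <;> simp
  have m1 := degreeOf_mul_le v (C c * X 0 ^ a * X 1 ^ b) ((X 2 : MvPolynomial (Fin 3) F) ^ e)
  have m2 := degreeOf_mul_le v (C c * X 0 ^ a) ((X 1 : MvPolynomial (Fin 3) F) ^ b)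
  have m3 := degreeOf_mul_le v (C c : MvPolynomial (Fin 3) F) ((X 0 : MvPolynomial (Fin 3) F) ^ a)
  have hC : degreeOf v (C c : MvPolynomial (Fin 3) F) = 0 := degreeOf_C _ _
  have h0 := hp 0 a
  have h1 := hp 1 b
  have h2 := hp 2 e
  fin_cases v <;> simp_all <;> omega

/-- the main telescoping identity -/
lemma weil_main (f : Polynomial F) (n : ℕ) (hn : f.natDegree = n) :
    (X 0 - X 1 : MvPolynomial (Fin 3) F) *
      ((∑ k ∈ Finset.range n, ∑ i ∈ Finset.Icc (k + 1) n, ∑ j ∈ Finset.range (n - k),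
          ∑ α ∈ Finset.range (i - k),
            MvPolynomial.C (f.coeff i * f.coeff (k + j + 1)) *
              MvPolynomial.X 0 ^ (α + k) * MvPolynomial.X 1 ^ (i - 1 - α)
                * MvPolynomial.X 2 ^ j)
      - (∑ k ∈ Finset.range n, ∑ i ∈ Finset.range k, ∑ j ∈ Finset.range (n - k),
          ∑ α ∈ Finset.range (k - i),
            MvPolynomial.C (f.coeff i * f.coeff (k + j + 1)) *
              MvPolynomial.X 0 ^ (α + i) * MvPolynomial.X 1 ^ (k - 1 - α)
                * MvPolynomial.X 2 ^ j))
    = Polynomial.aeval (X 0 : MvPolynomial (Fin 3) F) f * weilO2 f (1 : Fin 3) 2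
      - Polynomial.aeval (X 1 : MvPolynomial (Fin 3) F) f * weilO2 f (0 : Fin 3) 2 := by
  subst hn
  set n := f.natDegree with hn
  set x : MvPolynomial (Fin 3) F := X 0 with hx
  set y : MvPolynomial (Fin 3) F := X 1 with hy
  set z : MvPolynomial (Fin 3) F := X 2 with hz
  set ck : ℕ → MvPolynomial (Fin 3) F :=
    fun k => ∑ j ∈ Finset.range (n - k), C (f.coeff (k + j + 1)) * z ^ j with hck
  -- the per-`(k,i)` telescoped summand
  set G : ℕ → ℕ → MvPolynomial (Fin 3) F :=
    fun k i => C (f.coeff i) * (x ^ i * y ^ k - x ^ k * y ^ i) * ck k with hG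
  have key : ∀ k ∈ Finset.range n,
      (x - y) * ((∑ i ∈ Finset.Icc (k + 1) n, ∑ j ∈ Finset.range (n - k),
          ∑ α ∈ Finset.range (i - k),
            C (f.coeff i * f.coeff (k + j + 1)) * x ^ (α + k) * y ^ (i - 1 - α) * z ^ j)
        - ∑ i ∈ Finset.range k, ∑ j ∈ Finset.range (n - k),
          ∑ α ∈ Finset.range (k - i),
            C (f.coeff i * f.coeff (k + j + 1)) * x ^ (α + i) * y ^ (k - 1 - α) * z ^ j)
      = (Polynomial.aeval (X 0 : MvPolynomial (Fin 3) F) f * y ^ k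
          - Polynomial.aeval (X 1 : MvPolynomial (Fin 3) F) f * x ^ k) * ck k := by
    intro k hk
    rw [Finset.mem_range] at hk
    have h1 : (x - y) * (∑ i ∈ Finset.Icc (k + 1) n, ∑ j ∈ Finset.range (n - k),
          ∑ α ∈ Finset.range (i - k),
            C (f.coeff i * f.coeff (k + j + 1)) * x ^ (α + k) * y ^ (i - 1 - α) * z ^ j)
        = ∑ i ∈ Finset.Icc (k + 1) n, G k i := by
      rw [Finset.mul_sum]
      refine Finset.sum_congr rfl fun i hi => ?_
      rw [Finset.mem_Icc] at hi
      have step1 : ∀ j, (∑ α ∈ Finset.range (i - k),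
            C (f.coeff i * f.coeff (k + j + 1)) * x ^ (α + k) * y ^ (i - 1 - α) * z ^ j)
          = (C (f.coeff i * f.coeff (k + j + 1)) * z ^ j) *
              ∑ α ∈ Finset.range (i - k), x ^ (k + α) * y ^ (k + ((i - k) - 1 - α)) := by
        intro j
        rw [Finset.mul_sum]
        refine Finset.sum_congr rfl fun α hα => ?_
        rw [Finset.mem_range] at hα
        have e1 : α + k = k + α := by omega
        have e2 : i - 1 - α = k + ((i - k) - 1 - α) := by omega
        rw [e1, e2]; ring
      calc (x - y) * ∑ j ∈ Finset.range (n - k), ∑ α ∈ Finset.range (i - k),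
              C (f.coeff i * f.coeff (k + j + 1)) * x ^ (α + k) * y ^ (i - 1 - α) * z ^ j
          = ∑ j ∈ Finset.range (n - k), (C (f.coeff i * f.coeff (k + j + 1)) * z ^ j) *
              ((x - y) * ∑ α ∈ Finset.range (i - k), x ^ (k + α) * y ^ (k + ((i - k) - 1 - α)))
            := by
              rw [Finset.mul_sum]
              exact Finset.sum_congr rfl fun j _ => by rw [step1 j]; ring
        _ = ∑ j ∈ Finset.range (n - k), (C (f.coeff i * f.coeff (k + j + 1)) * z ^ j) *
              (x ^ i * y ^ k - x ^ k * y ^ i) := by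
              refine Finset.sum_congr rfl fun j _ => ?_
              rw [weil_tele]
              have hxi : (x : MvPolynomial (Fin 3) F) ^ i = x ^ k * x ^ (i - k) := by
                rw [← pow_add]; congr 1; omega
              have hyi : (y : MvPolynomial (Fin 3) F) ^ i = y ^ k * y ^ (i - k) := by
                rw [← pow_add]; congr 1; omega
              rw [hxi, hyi]; ring
        _ = G k i := by
              rw [hG, hck]
              simp only [C_mul]
              rw [Finset.mul_sum]
              exact Finset.sum_congr rfl fun j _ => by ring
    have h2 : (x - y) * (∑ i ∈ Finset.range k, ∑ j ∈ Finset.range (n - k),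
          ∑ α ∈ Finset.range (k - i),
            C (f.coeff i * f.coeff (k + j + 1)) * x ^ (α + i) * y ^ (k - 1 - α) * z ^ j)
        = -∑ i ∈ Finset.range k, G k i := by
      rw [Finset.mul_sum, ← Finset.sum_neg_distrib]
      refine Finset.sum_congr rfl fun i hi => ?_
      rw [Finset.mem_range] at hi
      have step1 : ∀ j, (∑ α ∈ Finset.range (k - i),
            C (f.coeff i * f.coeff (k + j + 1)) * x ^ (α + i) * y ^ (k - 1 - α) * z ^ j)
          = (C (f.coeff i * f.coeff (k + j + 1)) * z ^ j) *
              ∑ α ∈ Finset.range (k - i), x ^ (i + α) * y ^ (i + ((k - i) - 1 - α)) := by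
        intro j
        rw [Finset.mul_sum]
        refine Finset.sum_congr rfl fun α hα => ?_
        rw [Finset.mem_range] at hα
        have e1 : α + i = i + α := by omega
        have e2 : k - 1 - α = i + ((k - i) - 1 - α) := by omega
        rw [e1, e2]; ring
      calc (x - y) * ∑ j ∈ Finset.range (n - k), ∑ α ∈ Finset.range (k - i),
              C (f.coeff i * f.coeff (k + j + 1)) * x ^ (α + i) * y ^ (k - 1 - α) * z ^ j
          = ∑ j ∈ Finset.range (n - k), (C (f.coeff i * f.coeff (k + j + 1)) * z ^ j) *
              ((x - y) * ∑ α ∈ Finset.range (k - i), x ^ (i + α) * y ^ (i + ((k - i) - 1 - α)))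
            := by
              rw [Finset.mul_sum]
              exact Finset.sum_congr rfl fun j _ => by rw [step1 j]; ring
        _ = ∑ j ∈ Finset.range (n - k), (C (f.coeff i * f.coeff (k + j + 1)) * z ^ j) *
              (x ^ k * y ^ i - x ^ i * y ^ k) := by
              refine Finset.sum_congr rfl fun j _ => ?_
              rw [weil_tele]
              have hxi : (x : MvPolynomial (Fin 3) F) ^ k = x ^ i * x ^ (k - i) := by
                rw [← pow_add]; congr 1; omega
              have hyi : (y : MvPolynomial (Fin 3) F) ^ k = y ^ i * y ^ (k - i) := by
                rw [← pow_add]; congr 1; omega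
              rw [hxi, hyi]; ring
        _ = -G k i := by
              rw [hG, hck]
              simp only [C_mul]
              rw [Finset.mul_sum, ← Finset.sum_neg_distrib]
              exact Finset.sum_congr rfl fun j _ => by ring
    rw [mul_sub, h1, h2, sub_neg_eq_add]
    -- combine the two ranges into `range (n+1)`
    have hsplit : ∑ i ∈ Finset.Icc (k + 1) n, G k i + ∑ i ∈ Finset.range k, G k i
        = ∑ i ∈ Finset.range (n + 1), G k i := by
      have hGk : G k k = 0 := by rw [hG]; simp [sub_self]
      have h3 : ∑ i ∈ Finset.range (k + 1), G k i = ∑ i ∈ Finset.range k, G k i := by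
        rw [Finset.sum_range_succ, hGk, add_zero]
      have h4 : ∑ i ∈ Finset.range (k + 1), G k i + ∑ i ∈ Finset.Ico (k + 1) (n + 1), G k i
          = ∑ i ∈ Finset.range (n + 1), G k i := by
        rw [Finset.range_eq_Ico, Finset.range_eq_Ico]
        exact Finset.sum_Ico_consecutive (G k) (m := 0) (n := k + 1) (k := n + 1) (by omega) (by omega)
      have h5 : Finset.Icc (k + 1) n = Finset.Ico (k + 1) (n + 1) :=
        (Finset.Ico_add_one_right_eq_Icc _ _).symm
      rw [h3] at h4
      rw [h5, ← h4]
      exact add_comm _ _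
    rw [hsplit]
    -- expand the full sum into the aeval factors
    rw [weil_aeval_X, weil_aeval_X, Finset.sum_mul, Finset.sum_mul,
      ← Finset.sum_sub_distrib, Finset.sum_mul]
    refine Finset.sum_congr rfl fun i _ => ?_
    rw [hG]
    simp only [← hx, ← hy]
    ring
  -- now sum the key identity over k
  rw [← Finset.sum_sub_distrib, Finset.mul_sum, Finset.sum_congr rfl key,
    ← weil_A f (1 : Fin 3) 2, ← weil_A f (0 : Fin 3) 2, Finset.mul_sum, Finset.mul_sum,
    ← Finset.sum_sub_distrib]
  refine Finset.sum_congr rfl fun k _ => ?_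
  rw [hck]
  simp only [← hx, ← hy, ← hz]
  ring

end Aux

/-- In `𝔽_q[X_1,X_2,X_3]`, modulo the ideal generated by
`f(X_1), f(X_2), f(X_3)`, one has
`O_f^{(2)}(X_1,X_3)·O_f^{(2)}(X_2,X_3)
  ≡ ∑_{k=0}^{n-1} ∑_{i=k+1}^{n} ∑_{j=0}^{n-k-1} ∑_{α=0}^{i-k-1}
      a_i a_{k+j+1} X_1^{α+k} X_2^{i-1-α} X_3^{j}
    − ∑_{k=0}^{n-1} ∑_{i=0}^{k-1} ∑_{j=0}^{n-k-1} ∑_{α=0}^{k-1-i}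
      a_i a_{k+j+1} X_1^{α+i} X_2^{k-1-α} X_3^{j}`;
and this right-hand side, which has all partial degrees `< n`, is the rank-three Weil
operator `O_f^{(3)}(X_1,X_2,X_3)`. -/
theorem weil_operator_rank_three_formula {F : Type*} [Field F] [Fintype F]
    (f : Polynomial F) (hf : f.Monic) (n : ℕ) (hn : f.natDegree = n) (hn1 : 1 ≤ n)
    (RHS : MvPolynomial (Fin 3) F)
    (hRHS : RHS =
      (∑ k ∈ Finset.range n, ∑ i ∈ Finset.Icc (k + 1) n, ∑ j ∈ Finset.range (n - k),
          ∑ α ∈ Finset.range (i - k),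
            MvPolynomial.C (f.coeff i * f.coeff (k + j + 1)) *
              MvPolynomial.X 0 ^ (α + k) * MvPolynomial.X 1 ^ (i - 1 - α)
                * MvPolynomial.X 2 ^ j)
      - (∑ k ∈ Finset.range n, ∑ i ∈ Finset.range k, ∑ j ∈ Finset.range (n - k),
          ∑ α ∈ Finset.range (k - i),
            MvPolynomial.C (f.coeff i * f.coeff (k + j + 1)) *
              MvPolynomial.X 0 ^ (α + i) * MvPolynomial.X 1 ^ (k - 1 - α)
                * MvPolynomial.X 2 ^ j)) :
    (weilO2 f (0 : Fin 3) 2 * weilO2 f (1 : Fin 3) 2 - RHS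
      ∈ Ideal.span {Polynomial.aeval (MvPolynomial.X 0 : MvPolynomial (Fin 3) F) f,
          Polynomial.aeval (MvPolynomial.X 1 : MvPolynomial (Fin 3) F) f,
          Polynomial.aeval (MvPolynomial.X 2 : MvPolynomial (Fin 3) F) f})
    ∧ (∀ v : Fin 3, MvPolynomial.degreeOf v RHS < n) := by
  constructor
  · -- ideal membership
    have h02 := weil_L2 f (0 : Fin 3) (2 : Fin 3)
    have h12 := weil_L2 f (1 : Fin 3) (2 : Fin 3)
    have hQ := weil_Q f
    have hM := weil_main f n hn
    rw [← hRHS] at hM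
    have hkey : (X 0 - X 1 : MvPolynomial (Fin 3) F) *
        (weilO2 f (0 : Fin 3) 2 * weilO2 f (1 : Fin 3) 2 - RHS
          - weilQ f * Polynomial.aeval (X 2 : MvPolynomial (Fin 3) F) f) = 0 := by
      linear_combination (weilO2 f (1 : Fin 3) 2) * h02 - (weilO2 f (0 : Fin 3) 2) * h12
        - hM - (Polynomial.aeval (X 2 : MvPolynomial (Fin 3) F) f) * hQ
    have hne : (X 0 - X 1 : MvPolynomial (Fin 3) F) ≠ 0 := by
      refine sub_ne_zero.mpr fun h => ?_
      have := MvPolynomial.X_injective (R := F) h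
      exact absurd this (by decide)
    have hfac : weilO2 f (0 : Fin 3) 2 * weilO2 f (1 : Fin 3) 2 - RHS
        = weilQ f * Polynomial.aeval (X 2 : MvPolynomial (Fin 3) F) f := by
      rcases mul_eq_zero.mp hkey with h | h
      · exact absurd h hne
      · exact sub_eq_zero.mp h
    rw [hfac]
    refine Ideal.mul_mem_left _ _ (Ideal.subset_span ?_)
    simp
  · -- degree bounds
    intro v
    have hN : 0 < n := hn1
    rw [hRHS]
    refine lt_of_le_of_lt (degreeOf_sub_le _ _ _) (max_lt ?_ ?_)
    · refine weil_deg_sum_lt v hN _ _ fun k hk => ?_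
      refine weil_deg_sum_lt v hN _ _ fun i hi => ?_
      refine weil_deg_sum_lt v hN _ _ fun j hj => ?_
      refine weil_deg_sum_lt v hN _ _ fun α hα => ?_
      simp only [Finset.mem_range, Finset.mem_Icc] at hk hi hj hα
      refine lt_of_le_of_lt (weil_deg_term v _ _ _ _) ?_
      split_ifs <;> omega
    · refine weil_deg_sum_lt v hN _ _ fun k hk => ?_
      refine weil_deg_sum_lt v hN _ _ fun i hi => ?_
      refine weil_deg_sum_lt v hN _ _ fun j hj => ?_
      refine weil_deg_sum_lt v hN _ _ fun α hα => ?_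
      simp only [Finset.mem_range, Finset.mem_Icc] at hk hi hj hα
      refine lt_of_le_of_lt (weil_deg_term v _ _ _ _) ?_
      split_ifs <;> omega
end

section
/- Let p be a polynomial over a commutative ring and let δ_l denote the l-th Hasse–Schmidt derivative. (1) For all 0 ≤ l < k, p divides δ_l(p^k). (2) If p ∈ 𝔽_q[t] is monic irreducible (𝔽_q a finite field) and k ≥ 1, then δ_k(p^k) is coprime to p, i.e., p does not divide δ_k(p^k). -/
open Polynomial

private lemma auxA {R : Type*} [CommRing R] (p : Polynomial R) :
    ∀ k l : ℕ, l ≤ k → p ^ (k - l) ∣ Polynomial.hasseDeriv l (p ^ k) := by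
  intro k
  induction k with
  | zero => intro l hl; interval_cases l; simp
  | succ k ih =>
    intro l hl
    have : p ^ (k + 1) = p * p ^ k := by ring
    rw [this, hasseDeriv_mul]
    refine Finset.dvd_sum ?_
    rintro ⟨i, j⟩ hij
    rw [Finset.HasAntidiagonal.mem_antidiagonal] at hij
    rcases Nat.eq_zero_or_pos i with hi | hi
    · subst hi
      simp only [Nat.zero_add] at hij
      rcases Nat.lt_or_ge l (k + 1) with h | h
      · have hdvd := ih l (by omega)
        simp only [hasseDeriv_zero', Prod.fst, Prod.snd]
        have heq : k + 1 - l = (k - l) + 1 := by omega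
        rw [heq, pow_succ', hij]
        exact mul_dvd_mul (dvd_refl p) (by simpa using hdvd)
      · have hl1 : l = k + 1 := by omega
        subst hl1
        rw [hij]
        simp
    · have hj : j ≤ k := by omega
      have hdvd := ih j hj
      have hle : k + 1 - l ≤ k - j := by omega
      calc p ^ (k + 1 - l) ∣ p ^ (k - j) := pow_dvd_pow p hle
        _ ∣ hasseDeriv j (p ^ k) := hdvd
        _ ∣ hasseDeriv i p * hasseDeriv j (p ^ k) := dvd_mul_left _ _

private lemma auxB {R : Type*} [CommRing R] (p : Polynomial R) (k : ℕ) :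
    p ∣ Polynomial.hasseDeriv k (p ^ k) - (Polynomial.derivative p) ^ k := by
  induction k with
  | zero => simp
  | succ k ih =>
    have hmul : p ^ (k + 1) = p * p ^ k := by ring
    rw [hmul, hasseDeriv_mul]
    have key : ∀ ij ∈ Finset.HasAntidiagonal.antidiagonal (k + 1), ij ≠ (1, k) →
        p ∣ hasseDeriv ij.1 p * hasseDeriv ij.2 (p ^ k) := by
      rintro ⟨i, j⟩ hij hne
      rw [Finset.HasAntidiagonal.mem_antidiagonal] at hij
      rcases Nat.eq_zero_or_pos i with hi | hi
      · subst hi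
        simp only [hasseDeriv_zero']
        exact Dvd.dvd.mul_right (dvd_refl p) _
      · have hj : j < k := by
          rcases Nat.lt_or_ge j k with h | h
          · exact h
          · exfalso
            have : j = k := by omega
            subst this
            have : i = 1 := by omega
            subst this
            exact hne rfl
        have : p ∣ hasseDeriv j (p ^ k) := by
          have := auxA p k j (le_of_lt hj)
          calc p = p ^ 1 := (pow_one p).symm
            _ ∣ p ^ (k - j) := pow_dvd_pow p (by omega)
            _ ∣ _ := this
        exact Dvd.dvd.mul_left this _
    have hmem : (1, k) ∈ Finset.HasAntidiagonal.antidiagonal (k + 1) :=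
      Finset.HasAntidiagonal.mem_antidiagonal.mpr (by omega)
    rw [← Finset.add_sum_erase _ _ hmem]
    have h1 : p ∣ ∑ ij ∈ (Finset.HasAntidiagonal.antidiagonal (k + 1)).erase (1, k),
        hasseDeriv ij.1 p * hasseDeriv ij.2 (p ^ k) := by
      refine Finset.dvd_sum ?_
      intro ij hij
      rw [Finset.mem_erase] at hij
      exact key ij hij.2 hij.1
    have h2 : p ∣ hasseDeriv 1 p * hasseDeriv k (p ^ k) -
        (Polynomial.derivative p) ^ (k + 1) := by
      rw [hasseDeriv_one', pow_succ']
      have : Polynomial.derivative p * hasseDeriv k (p ^ k) -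
          Polynomial.derivative p * Polynomial.derivative p ^ k =
          Polynomial.derivative p * (hasseDeriv k (p ^ k) - Polynomial.derivative p ^ k) := by
        ring
      rw [this]
      exact Dvd.dvd.mul_left ih _
    have := dvd_add h2 h1
    have heq : hasseDeriv 1 p * hasseDeriv k (p ^ k) - Polynomial.derivative p ^ (k + 1)
        + ∑ ij ∈ (Finset.HasAntidiagonal.antidiagonal (k + 1)).erase (1, k),
            hasseDeriv ij.1 p * hasseDeriv ij.2 (p ^ k)
        = hasseDeriv 1 p * hasseDeriv k (p ^ k)
          + ∑ ij ∈ (Finset.HasAntidiagonal.antidiagonal (k + 1)).erase (1, k),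
              hasseDeriv ij.1 p * hasseDeriv ij.2 (p ^ k)
          - Polynomial.derivative p ^ (k + 1) := by ring
    rwa [heq] at this

/-- Let `δ_l` denote the `l`-th Hasse–Schmidt derivative of polynomials
(Mathlib's `Polynomial.hasseDeriv`).  (1) Over any commutative ring, for all `0 ≤ l < k`,
`p` divides `δ_l(p^k)`.  (2) If `p ∈ 𝔽_q[t]` is monic irreducible over a finite field and
`k ≥ 1`, then `δ_k(p^k)` is coprime to `p`, i.e. `p` does not divide `δ_k(p^k)`. -/
theorem hasseDeriv_pow_dvd_and_coprime :
    (∀ (R : Type) [CommRing R] (p : Polynomial R) (k l : ℕ), l < k →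
        p ∣ Polynomial.hasseDeriv l (p ^ k))
    ∧ (∀ (F : Type) [Field F] [Fintype F] (p : Polynomial F), p.Monic → Irreducible p →
        ∀ k : ℕ, 1 ≤ k → ¬ p ∣ Polynomial.hasseDeriv k (p ^ k)) := by
  constructor
  · intro R _ p k l hlk
    calc p = p ^ 1 := (pow_one p).symm
      _ ∣ p ^ (k - l) := pow_dvd_pow p (by omega)
      _ ∣ _ := auxA p k l (le_of_lt hlk)
  · intro F _ _ p hmon hirr k hk hdvd
    have hsep : p.Separable := PerfectField.separable_of_irreducible hirr
    have hcop : IsCoprime p (Polynomial.derivative p) := hsep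
    have : p ∣ (Polynomial.derivative p) ^ k := by
      have h := auxB p k
      have : (Polynomial.derivative p) ^ k =
          hasseDeriv k (p ^ k) - (hasseDeriv k (p ^ k) - (Polynomial.derivative p) ^ k) := by
        ring
      rw [this]
      exact dvd_sub hdvd h
    have hunit : IsUnit p := (hcop.pow_right).isUnit_of_dvd' (dvd_refl p) this
    exact hirr.not_isUnit hunit
end

section
/- Let p ∈ 𝔽_q[t] be monic irreducible of degree d, let k ≥ 1 and 0 ≤ l < k. Viewing O_{p^k}^{(2)}(x,t) and O_p^{(2)}(x,t) as polynomials in t with coefficients in 𝔽_q[x], and letting δ_l^t denote the l-th Hasse–Schmidt derivative with respect to t, one has δ_l^t(O_{p^k}^{(2)}(x,t)) ≡ p(x)^{k−l−1}·(O_p^{(2)}(x,t))^{l+1} modulo p(t); that is, p(t) divides δ_l^t(O_{p^k}^{(2)}(x,t)) − p(x)^{k−l−1}·(O_p^{(2)}(x,t))^{l+1} in 𝔽_q[x,t]. -/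
open Finset

/-- The rank-two Weil operator `O_g^{(2)}(x,t) = ∑_{j=1}^{deg g} b_j ∑_{α+β=j-1} x^α t^β`,
viewed as a polynomial in `t` with coefficients in `𝔽_q[x]` (the unique polynomial with
`(x − t)·O_g^{(2)}(x,t) = g(x) − g(t)`). -/
noncomputable def weilO2xt {F : Type*} [Field F] (g : Polynomial F) :
    Polynomial (Polynomial F) :=
  ∑ j ∈ Finset.range g.natDegree,
    Polynomial.C (Polynomial.C (g.coeff (j + 1))) *
      ∑ pr ∈ Finset.HasAntidiagonal.antidiagonal j,
        (Polynomial.C Polynomial.X) ^ pr.1 * Polynomial.X ^ pr.2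

namespace WeilAux

open Polynomial

/-- The swap-of-variables ring hom on `R[X][Y]`. -/
noncomputable def swapHom {F : Type*} [CommSemiring F] :
    Polynomial (Polynomial F) →+* Polynomial (Polynomial F) :=
  Polynomial.eval₂RingHom
    (Polynomial.eval₂RingHom (Polynomial.C.comp Polynomial.C) Polynomial.X)
    (Polynomial.C Polynomial.X)

variable {F : Type*} [Field F]

lemma swapHom_CC (a : F) : swapHom (C (C a)) = C (C a) := by
  simp [swapHom]

lemma swapHom_CX : swapHom (C (X : Polynomial F)) = X := by
  simp [swapHom]

lemma swapHom_X : swapHom (X : Polynomial (Polynomial F)) = C X := by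
  simp [swapHom]

lemma swapHom_swapHom (f : Polynomial (Polynomial F)) : swapHom (swapHom f) = f := by
  have : (swapHom.comp swapHom : Polynomial (Polynomial F) →+* Polynomial (Polynomial F))
      = RingHom.id _ := by
    apply Polynomial.ringHom_ext'
    · apply Polynomial.ringHom_ext
      · intro a
        simp [swapHom_CC]
      · simp [swapHom_CX, swapHom_X]
    · simp [swapHom_X, swapHom_CX]
  exact DFunLike.congr_fun this f

lemma swapHom_map_C (p : Polynomial F) : swapHom (p.map C) = C p := by
  have h1 : swapHom (p.map C) = p.eval₂ (C.comp (C : F →+* Polynomial F)) (C X) := by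
    rw [swapHom, coe_eval₂RingHom, eval₂_map]
    congr 1
    ext a
    simp
  rw [h1, ← hom_eval₂, eval₂_C_X]

lemma prime_map_C (p : Polynomial F) (hirr : Irreducible p) :
    Prime (p.map (Polynomial.C : F →+* Polynomial F)) := by
  have h1 : Prime (Polynomial.C p : Polynomial (Polynomial F)) :=
    Polynomial.prime_C_iff.mpr hirr.prime
  refine comap_prime swapHom swapHom swapHom_swapHom ?_
  rw [swapHom_map_C]
  exact h1

lemma weil_mul (g : Polynomial F) :
    (C (X : Polynomial F) - X) * weilO2xt g = C g - g.map C := by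
  have key : ∀ j : ℕ, (C (X : Polynomial F) - X) *
      (∑ pr ∈ Finset.HasAntidiagonal.antidiagonal j, (C (X : Polynomial F)) ^ pr.1 * X ^ pr.2)
      = (C (X : Polynomial F)) ^ (j+1) - X ^ (j+1) := by
    intro j
    rw [Finset.Nat.sum_antidiagonal_eq_sum_range_succ_mk, mul_comm]
    simpa using geom_sum₂_mul (C (X : Polynomial F)) X (j+1)
  have rhs : C g - g.map C = ∑ j ∈ Finset.range (g.natDegree + 1),
      C (C (g.coeff j)) * ((C (X : Polynomial F)) ^ j - X ^ j) := by
    conv_lhs => rw [g.as_sum_range]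
    rw [map_sum, Polynomial.map_sum, ← Finset.sum_sub_distrib]
    refine Finset.sum_congr rfl fun j _ => ?_
    rw [← C_mul_X_pow_eq_monomial]
    simp [mul_sub, map_pow]
  rw [rhs, Finset.sum_range_succ', weilO2xt, Finset.mul_sum]
  simp only [pow_zero, sub_self, mul_zero, add_zero]
  refine Finset.sum_congr rfl fun j _ => ?_
  rw [mul_left_comm, key]

lemma dvd_hasseDeriv_pow {R : Type*} [CommRing R] (Q : Polynomial R) :
    ∀ k l : ℕ, l < k → Q ∣ Polynomial.hasseDeriv l (Q ^ k) := by
  intro k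
  induction k with
  | zero => exact fun l h => absurd h (Nat.not_lt_zero l)
  | succ n ih =>
    intro l hl
    rw [pow_succ, hasseDeriv_mul]
    apply Finset.dvd_sum
    rintro ⟨i, j⟩ hij
    rw [Finset.HasAntidiagonal.mem_antidiagonal] at hij
    rcases lt_or_ge i n with h | h
    · exact Dvd.dvd.mul_right (ih i h) _
    · have hj : j = 0 := by omega
      subst hj
      rw [hasseDeriv_zero']
      exact dvd_mul_left Q _

lemma hasse_step {R : Type*} [CommRing R] (n : ℕ) (W : Polynomial (Polynomial R)) :
    Polynomial.hasseDeriv (n+1) ((C (X : Polynomial R) - X) * W)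
      = (C (X : Polynomial R) - X) * Polynomial.hasseDeriv (n+1) W
        - Polynomial.hasseDeriv n W := by
  rw [hasseDeriv_mul, Finset.Nat.sum_antidiagonal_eq_sum_range_succ_mk,
    Finset.sum_range_succ', Finset.sum_range_succ']
  have h2 : ∀ i : ℕ, Polynomial.hasseDeriv (i + 1 + 1) (C (X : Polynomial R) - X) = 0 := by
    intro i
    rw [map_sub, hasseDeriv_C _ _ (by omega), hasseDeriv_X _ (by omega), sub_zero]
  have h1 : Polynomial.hasseDeriv 1 (C (X : Polynomial R) - X) = -1 := by
    rw [map_sub, hasseDeriv_C _ _ (by omega), hasseDeriv_one', derivative_X, zero_sub]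
  simp only [h2, zero_mul, Finset.sum_const_zero, zero_add, h1, hasseDeriv_zero']
  have e0 : n + 1 - 0 = n + 1 := by omega
  have e1 : n + 1 - 1 = n := by omega
  rw [e0, e1]
  ring

end WeilAux

/-- Let `p ∈ 𝔽_q[t]` be monic irreducible of degree `d`, `k ≥ 1`, `0 ≤ l < k`.
Then `δ_l^t(O_{p^k}^{(2)}(x,t)) ≡ p(x)^{k-l-1}·(O_p^{(2)}(x,t))^{l+1}` modulo `p(t)`, i.e.
`p(t)` divides `δ_l^t(O_{p^k}^{(2)}(x,t)) − p(x)^{k-l-1}·(O_p^{(2)}(x,t))^{l+1}` in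
`𝔽_q[x,t]`, where `δ_l^t` is the `l`-th Hasse–Schmidt derivative with respect to `t`. -/
theorem hasseDeriv_weil_operator_prime_power {F : Type*} [Field F] [Fintype F]
    (p : Polynomial F) (hp : p.Monic) (hirr : Irreducible p) (d : ℕ) (hd : p.natDegree = d)
    (k l : ℕ) (hk : 1 ≤ k) (hl : l < k) :
    (p.map Polynomial.C) ∣
      (Polynomial.hasseDeriv l (weilO2xt (p ^ k))
        - Polynomial.C (p ^ (k - l - 1)) * (weilO2xt p) ^ (l + 1)) := by
  classical
  open Polynomial WeilAux in
  have hPprime : Prime (p.map (Polynomial.C : F →+* Polynomial F)) := prime_map_C p hirr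
  -- `p(t)` does not divide `x - t`
  have hPu : ¬ (p.map (Polynomial.C : F →+* Polynomial F)) ∣
      (Polynomial.C Polynomial.X - Polynomial.X) := by
    intro h
    have h2 : (Polynomial.C p : Polynomial (Polynomial F)) ∣
        swapHom (Polynomial.C Polynomial.X - Polynomial.X) := by
      rw [← swapHom_map_C p]
      exact map_dvd swapHom h
    have h3 : swapHom (Polynomial.C Polynomial.X - Polynomial.X)
        = (Polynomial.X : Polynomial (Polynomial F)) - Polynomial.C Polynomial.X := by
      rw [map_sub, swapHom_CX, swapHom_X]
    rw [h3, Polynomial.C_dvd_iff_dvd_coeff] at h2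
    have h4 := h2 1
    simp [Polynomial.coeff_C] at h4
    exact hirr.not_isUnit (isUnit_of_dvd_one h4)
  -- the key induction
  have key : ∀ m, m < k →
      (p.map (Polynomial.C : F →+* Polynomial F)) ∣
        (Polynomial.C Polynomial.X - Polynomial.X) ^ (m+1)
            * Polynomial.hasseDeriv m (weilO2xt (p ^ k))
          - (Polynomial.C p) ^ k := by
    intro m
    induction m with
    | zero =>
      intro _
      rw [pow_one, Polynomial.hasseDeriv_zero', weil_mul]
      have e : Polynomial.C (p ^ k) - (p ^ k).map Polynomial.C - Polynomial.C p ^ k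
          = -((p.map (Polynomial.C : F →+* Polynomial F)) ^ k) := by
        rw [map_pow, Polynomial.map_pow]
        ring
      rw [e]
      exact (dvd_neg).mpr (dvd_pow_self (p.map (Polynomial.C : F →+* Polynomial F))
        (Nat.one_le_iff_ne_zero.mp hk))
    | succ n ih =>
      intro hn
      have h2 : (p.map (Polynomial.C : F →+* Polynomial F)) ∣
          (Polynomial.C Polynomial.X - Polynomial.X)
              * Polynomial.hasseDeriv (n+1) (weilO2xt (p ^ k))
            - Polynomial.hasseDeriv n (weilO2xt (p ^ k)) := by
        have hs := hasse_step n (weilO2xt (p ^ k))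
        rw [weil_mul] at hs
        rw [← hs, map_sub, Polynomial.hasseDeriv_C _ _ (Nat.succ_pos n), Polynomial.map_pow,
          zero_sub]
        exact (dvd_neg).mpr (dvd_hasseDeriv_pow _ k (n+1) hn)
      have e : (Polynomial.C Polynomial.X - Polynomial.X) ^ (n+1+1)
              * Polynomial.hasseDeriv (n+1) (weilO2xt (p ^ k)) - Polynomial.C p ^ k
          = (Polynomial.C Polynomial.X - Polynomial.X) ^ (n+1) *
              ((Polynomial.C Polynomial.X - Polynomial.X)
                  * Polynomial.hasseDeriv (n+1) (weilO2xt (p ^ k))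
                - Polynomial.hasseDeriv n (weilO2xt (p ^ k)))
            + ((Polynomial.C Polynomial.X - Polynomial.X) ^ (n+1)
                  * Polynomial.hasseDeriv n (weilO2xt (p ^ k)) - Polynomial.C p ^ k) := by
        ring
      rw [e]
      exact dvd_add (h2.mul_left _) (ih (by omega))
  -- the power of the degree-one Weil operator
  have hW1 : (p.map (Polynomial.C : F →+* Polynomial F)) ∣
      (Polynomial.C Polynomial.X - Polynomial.X) ^ (l+1) * (weilO2xt p) ^ (l+1)
        - (Polynomial.C p : Polynomial (Polynomial F)) ^ (l+1) := by
    rw [← mul_pow]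
    have hPab : (p.map (Polynomial.C : F →+* Polynomial F)) ∣
        ((Polynomial.C Polynomial.X - Polynomial.X) * weilO2xt p - Polynomial.C p) := by
      rw [weil_mul]
      have : Polynomial.C p - p.map Polynomial.C - Polynomial.C p
          = -(p.map (Polynomial.C : F →+* Polynomial F)) := by ring
      rw [this]
      exact ⟨-1, by ring⟩
    exact dvd_trans hPab (sub_dvd_pow_sub_pow _ _ (l+1))
  have hCk : Polynomial.C (p ^ (k - l - 1)) * (Polynomial.C p) ^ (l+1)
      = (Polynomial.C p : Polynomial (Polynomial F)) ^ k := by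
    have hkk : k - l - 1 + (l + 1) = k := by omega
    rw [← map_pow, ← map_mul, ← pow_add, hkk, map_pow]
  have hfinal : (p.map (Polynomial.C : F →+* Polynomial F)) ∣
      (Polynomial.C Polynomial.X - Polynomial.X) ^ (l+1) *
        (Polynomial.hasseDeriv l (weilO2xt (p ^ k))
          - Polynomial.C (p ^ (k - l - 1)) * (weilO2xt p) ^ (l + 1)) := by
    have e : (Polynomial.C Polynomial.X - Polynomial.X) ^ (l+1) *
          (Polynomial.hasseDeriv l (weilO2xt (p ^ k))
            - Polynomial.C (p ^ (k - l - 1)) * (weilO2xt p) ^ (l + 1))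
        = ((Polynomial.C Polynomial.X - Polynomial.X) ^ (l+1)
              * Polynomial.hasseDeriv l (weilO2xt (p ^ k)) - (Polynomial.C p) ^ k)
          - Polynomial.C (p ^ (k - l - 1)) *
              ((Polynomial.C Polynomial.X - Polynomial.X) ^ (l+1) * (weilO2xt p) ^ (l+1)
                - (Polynomial.C p) ^ (l+1)) := by
      linear_combination -hCk
    rw [e]
    exact dvd_sub (key l hl) (hW1.mul_left _)
  rcases hPprime.dvd_mul.mp hfinal with h | h
  · exact absurd (hPprime.dvd_of_dvd_pow h) hPu
  · exact h
end

section
/- Let K be a commutative ring of prime characteristic p and let q = p^e for some e ≥ 1. For ω ∈ K[[t]], let ω^{(k)} denote the power series obtained by raising each coefficient of ω to the q^k-th power. Fix r ≥ 1 and elements g_0 = θ, g_1, …, g_r ∈ K. Suppose ω_1, …, ω_r ∈ K[[t]] each satisfy the Frobenius difference equation t·ω_i = Σ_{j=0}^{r} g_j·ω_i^{(j)}. Let κ ∈ K[[t]] be the determinant of the r×r matrix whose (i,j)-entry is ω_j^{(i−1)} (the Moore determinant of ω_1,…,ω_r). Then (−1)^{r−1}·g_r·κ^{(1)} = (t − θ)·κ.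 -/
private lemma ps_map_map {K : Type*} [CommRing K] (f g : K →+* K) (φ : PowerSeries K) :
    PowerSeries.map f (PowerSeries.map g φ) = PowerSeries.map (f.comp g) φ := by
  ext n
  simp [PowerSeries.coeff_map]

theorem moore_determinant_frobenius_equation
    {K : Type*} [CommRing K] (p : ℕ) [Fact p.Prime] [CharP K p]
    (e : ℕ) (he : 1 ≤ e) (q : ℕ) (hq : q = p ^ e)
    (r : ℕ) (hr : 1 ≤ r)
    (g : Fin (r + 1) → K) (θ : K) (hθ : g 0 = θ)
    (ω : Fin r → PowerSeries K)
    (hω : ∀ i : Fin r,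
      PowerSeries.X * ω i =
        ∑ j : Fin (r + 1),
          PowerSeries.C (g j) *
            PowerSeries.map (iterateFrobenius K p (e * (j : ℕ))) (ω i))
    (κ : PowerSeries K)
    (hκ : κ = Matrix.det (Matrix.of fun i j : Fin r =>
        PowerSeries.map (iterateFrobenius K p (e * (i : ℕ))) (ω j))) :
    (-1 : PowerSeries K) ^ (r - 1) * PowerSeries.C (g (Fin.last r)) *
        PowerSeries.map (iterateFrobenius K p e) κ
      = (PowerSeries.X - PowerSeries.C θ) * κ := by
  obtain ⟨s, rfl⟩ : ∃ s, r = s + 1 := ⟨r - 1, by omega⟩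
  set M : Matrix (Fin (s+1)) (Fin (s+1)) (PowerSeries K) :=
    Matrix.of fun i j => PowerSeries.map (iterateFrobenius K p (e * (i : ℕ))) (ω j) with hM
  set M₁ : Matrix (Fin (s+1)) (Fin (s+1)) (PowerSeries K) :=
    Matrix.of fun i j => PowerSeries.map (iterateFrobenius K p (e * ((i : ℕ) + 1))) (ω j) with hM₁
  -- the Frobenius twist of κ
  have hmap : M.map (PowerSeries.map (iterateFrobenius K p e)) = M₁ := by
    ext i j : 2
    simp only [Matrix.map_apply, hM, hM₁, Matrix.of_apply]
    rw [ps_map_map, ← iterateFrobenius_add]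
    congr 2
    ring
  have hFκ : PowerSeries.map (iterateFrobenius K p e) κ = M₁.det := by
    rw [hκ, RingHom.map_det]
    exact congrArg Matrix.det hmap
  -- the key row identity from the Frobenius difference equation
  have key : ∀ j : Fin (s+1),
      PowerSeries.C (g (Fin.last (s+1))) * M₁ (Fin.last s) j =
        (PowerSeries.X - PowerSeries.C θ) * ω j -
          ∑ k : Fin s, PowerSeries.C (g (k.succ.castSucc)) *
            PowerSeries.map (iterateFrobenius K p (e * ((k : ℕ) + 1))) (ω j) := by
    intro j
    have h := hω j
    rw [Fin.sum_univ_castSucc, Fin.sum_univ_succ] at h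
    simp only [Fin.castSucc_zero, Fin.val_zero, Nat.mul_zero, iterateFrobenius_zero,
      PowerSeries.map_id, id_eq, hθ, Fin.coe_castSucc, Fin.val_succ, Fin.val_last] at h
    simp only [hM₁, Matrix.of_apply, Fin.val_last]
    linear_combination -h
  -- the rotated matrix
  set A := M₁.updateRow (Fin.last s) (fun j => ω j) with hAdef
  have hA : A = M.submatrix (finRotate (s+1)) id := by
    ext i j
    rcases eq_or_ne i (Fin.last s) with hi | hi
    · subst hi
      simp [hAdef, Matrix.updateRow_self, Matrix.submatrix_apply, finRotate_succ_apply, hM,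
        Fin.last_add_one]
    · have hval : ((i + 1 : Fin (s+1)) : ℕ) = (i : ℕ) + 1 := by
        rw [Fin.val_add_one_of_lt]
        exact lt_of_le_of_ne (Fin.le_last i) hi
      simp only [hAdef, Matrix.updateRow_apply, if_neg hi, Matrix.submatrix_apply,
        finRotate_succ_apply, hM, hM₁, Matrix.of_apply, id_eq, hval]
  -- determinant of A
  have hdetA : A.det = (-1 : PowerSeries K) ^ s * M.det := by
    rw [hA, Matrix.det_permute, sign_finRotate]
    norm_cast
  -- coefficients for the linear combination of rows
  set c : Fin (s+1) → PowerSeries K := fun i => -(PowerSeries.C (g i.succ)) with hc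
  have hAk : ∀ k : Fin s, A k.castSucc
      = fun j => PowerSeries.map (iterateFrobenius K p (e * ((k : ℕ) + 1))) (ω j) := by
    intro k
    have hne : k.castSucc ≠ Fin.last s := (Fin.castSucc_lt_last k).ne
    funext j
    simp [hAdef, Matrix.updateRow_apply, if_neg hne, hM₁]
  have hAlast : A (Fin.last s) = fun j => ω j := by
    funext j; simp [hAdef]
  have hgc : ∀ k : Fin s, c k.castSucc = -(PowerSeries.C (g k.succ.castSucc)) := by
    intro k
    have hcc : (Fin.castSucc k).succ = (Fin.succ k).castSucc := Fin.ext (by simp)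
    show -(PowerSeries.C (g (Fin.castSucc k).succ)) = _
    rw [hcc]
  have hrow : ∀ j, PowerSeries.C (g (Fin.last (s+1))) * M₁ (Fin.last s) j
      = ((PowerSeries.X - PowerSeries.C θ) • A (Fin.last s)
        + ∑ k ∈ Finset.univ.erase (Fin.last s), c k • A k) j := by
    intro j
    have herase : (∑ k ∈ Finset.univ.erase (Fin.last s), c k • A k) j
        = ∑ k : Fin s, c k.castSucc * A k.castSucc j := by
      rw [Finset.sum_apply, Finset.sum_erase_eq_sub (Finset.mem_univ _),
        Fin.sum_univ_castSucc]
      simp only [Pi.smul_apply, smul_eq_mul]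
      ring
    have hsum2 : ∑ k : Fin s, c k.castSucc * A k.castSucc j
        = -∑ k : Fin s, PowerSeries.C (g (k.succ.castSucc)) *
            PowerSeries.map (iterateFrobenius K p (e * ((k : ℕ) + 1))) (ω j) := by
      rw [← Finset.sum_neg_distrib]
      refine Finset.sum_congr rfl fun k _ => ?_
      simp only [hAk k, hgc k]
      ring
    simp only [Pi.add_apply, Pi.smul_apply, smul_eq_mul, herase, hAlast, hsum2]
    rw [key j]
    ring
  -- main determinant identity
  have main : PowerSeries.C (g (Fin.last (s+1))) * M₁.det
      = (PowerSeries.X - PowerSeries.C θ) * A.det := by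
    have h1 : M₁.updateRow (Fin.last s)
          (fun j => PowerSeries.C (g (Fin.last (s+1))) * M₁ (Fin.last s) j)
        = A.updateRow (Fin.last s)
          ((PowerSeries.X - PowerSeries.C θ) • A (Fin.last s)
            + ∑ k ∈ Finset.univ.erase (Fin.last s), c k • A k) := by
      ext i j
      rcases eq_or_ne i (Fin.last s) with hi | hi
      · subst hi
        rw [Matrix.updateRow_self, Matrix.updateRow_self, hrow j]
      · rw [Matrix.updateRow_ne hi, Matrix.updateRow_ne hi, hAdef, Matrix.updateRow_ne hi]
    have h2 := Matrix.det_updateRow_sum_aux A (Finset.univ.erase (Fin.last s))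
      (Finset.univ.notMem_erase _) c (PowerSeries.X - PowerSeries.C θ)
    calc PowerSeries.C (g (Fin.last (s+1))) * M₁.det
        = (M₁.updateRow (Fin.last s)
            (fun j => PowerSeries.C (g (Fin.last (s+1))) * M₁ (Fin.last s) j)).det := by
          have heq : (fun j => PowerSeries.C (g (Fin.last (s+1))) * M₁ (Fin.last s) j)
              = (PowerSeries.C (g (Fin.last (s+1)))) • M₁ (Fin.last s) := rfl
          rw [heq, Matrix.det_updateRow_smul, Matrix.updateRow_eq_self]
      _ = (PowerSeries.X - PowerSeries.C θ) * A.det := by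
          rw [h1, h2, smul_eq_mul]
  -- final assembly
  have hpow : ((-1 : PowerSeries K) ^ s) * ((-1 : PowerSeries K) ^ s) = 1 := by
    rw [← pow_add]
    exact Even.neg_one_pow ⟨s, rfl⟩
  have hs1 : s + 1 - 1 = s := rfl
  rw [hs1, hFκ, mul_assoc, main, hdetA]
  calc (-1 : PowerSeries K) ^ s
        * ((PowerSeries.X - PowerSeries.C θ) * ((-1 : PowerSeries K) ^ s * M.det))
      = ((-1 : PowerSeries K) ^ s * (-1 : PowerSeries K) ^ s)
          * ((PowerSeries.X - PowerSeries.C θ) * M.det) := by ring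
    _ = (PowerSeries.X - PowerSeries.C θ) * κ := by rw [hpow, one_mul, ← hκ]
end
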